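/- arXiv:1904.02544 — 18 statements merged into one kernel-verified Lean document; each statement's English description precedes it below -/
import Mathlib

section
/- For a function f : B^n → B^n with f_n(x,0) = f_n(x,1) for all x ∈ B^{n-1}, and the reduced function f̃ defined by f̃_i(x) = f_i(x, f_n(x,0)): if the asynchronous dynamics of f̃ has a path from x to y, then the asynchronous dynamics of f has a path from (x, f_n(x,0)) to (y, f_n(y,0)). -/
/-- One step of the fully asynchronous dynamics of a Boolean network `f`:
an edge from `x` to the state obtained by flipping coordinate `i`, whenever `f_i(x) ≠ x_i`. -/
def asyncStep {ι : Type*} [DecidableEq ι] (f : (ι → Bool) → (ι → Bool))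
    (x y : ι → Bool) : Prop :=
  ∃ i, f x i ≠ x i ∧ y = Function.update x i (!x i)

/-- Value of the last component of `f`, with the last input set to `false`. -/
def lastComp {n : ℕ} (f : (Fin (n + 1) → Bool) → (Fin (n + 1) → Bool))
    (x : Fin n → Bool) : Bool :=
  f (Fin.snoc x false) (Fin.last n)

/-- The reduced function obtained by eliminating the last variable:
`f̃_i(x) = f_i(x, f_n(x,0))`. -/
def reduced {n : ℕ} (f : (Fin (n + 1) → Bool) → (Fin (n + 1) → Bool))
    (x : Fin n → Bool) : Fin n → Bool :=
  fun i => f (Fin.snoc x (lastComp f x)) i.castSucc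


lemma lift_step {n : ℕ} (f : (Fin (n + 1) → Bool) → (Fin (n + 1) → Bool))
    (hno : ∀ (x : Fin n → Bool) (a b : Bool),
      f (Fin.snoc x a) (Fin.last n) = f (Fin.snoc x b) (Fin.last n))
    (x x' : Fin n → Bool) (h : asyncStep (reduced f) x x') :
    Relation.ReflTransGen (asyncStep f)
      (Fin.snoc x (lastComp f x)) (Fin.snoc x' (lastComp f x')) := by
  obtain ⟨i, hne, rfl⟩ := h
  set x' := Function.update x i (!x i) with hx'
  -- first step: flip coordinate i
  have step1 : asyncStep f (Fin.snoc x (lastComp f x)) (Fin.snoc x' (lastComp f x)) := by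
    refine ⟨i.castSucc, ?_, ?_⟩
    · simpa [reduced, Fin.snoc_castSucc] using hne
    · rw [hx', ← Fin.snoc_update]
      simp [Fin.snoc_castSucc]
  -- possibly second step: update last coordinate
  by_cases hc : lastComp f x' = lastComp f x
  · rw [hc]
    exact Relation.ReflTransGen.single step1
  · have key : f (Fin.snoc x' (lastComp f x)) (Fin.last n) = lastComp f x' := by
      rw [hno x' (lastComp f x) false]; rfl
    have step2 : asyncStep f (Fin.snoc x' (lastComp f x)) (Fin.snoc x' (lastComp f x')) := by
      refine ⟨Fin.last n, ?_, ?_⟩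
      · rw [key, Fin.snoc_last]; exact fun h => hc h
      · rw [Fin.update_snoc_last, Fin.snoc_last]
        cases h1 : lastComp f x' <;> cases h2 : lastComp f x <;> simp [h1, h2] at hc ⊢
    exact Relation.ReflTransGen.head step1 (Relation.ReflTransGen.single step2)

theorem stmt1 {n : ℕ} (f : (Fin (n + 1) → Bool) → (Fin (n + 1) → Bool))
    (hno : ∀ (x : Fin n → Bool) (a b : Bool),
      f (Fin.snoc x a) (Fin.last n) = f (Fin.snoc x b) (Fin.last n))
    (x y : Fin n → Bool)
    (hpath : Relation.ReflTransGen (asyncStep (reduced f)) x y) :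
    Relation.ReflTransGen (asyncStep f)
      (Fin.snoc x (lastComp f x)) (Fin.snoc y (lastComp f y)) := by
  induction hpath with
  | refl => exact Relation.ReflTransGen.refl
  | tail _ h ih => exact ih.trans (lift_step f hno _ _ h)
end

section
/- Let f : B^n → B^n satisfy f_n(x,0) = f_n(x,1) for all x ∈ B^{n-1}, and let f̃ be the reduced function f̃_i(x) = f_i(x, f_n(x,0)). If A ⊆ B^n is a trap space for f, then the projection of A onto the first n-1 coordinates is a trap space for f̃. -/
/-- A trap set: a set closed under the asynchronous dynamics. -/
def isTrapSet {ι : Type*} [DecidableEq ι] (f : (ι → Bool) → (ι → Bool))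
    (A : Set (ι → Bool)) : Prop :=
  ∀ x ∈ A, ∀ y, asyncStep f x y → y ∈ A

/-- A subspace `x[I] = {y | y_i = x_i for all i ∉ I}`. -/
def isSubspace {ι : Type*} (A : Set (ι → Bool)) : Prop :=
  ∃ (x : ι → Bool) (I : Set ι), A = {y | ∀ i ∉ I, y i = x i}

/-- A trap space: a trap set that is also a subspace. -/
def isTrapSpace {ι : Type*} [DecidableEq ι] (f : (ι → Bool) → (ι → Bool))
    (A : Set (ι → Bool)) : Prop :=
  isSubspace A ∧ isTrapSet f A

lemma update_last_eq_snoc {n : ℕ} (z : Fin (n + 1) → Bool) (b : Bool) :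
    Function.update z (Fin.last n) b = Fin.snoc (Fin.init z) b := by
  funext j
  rcases Fin.eq_castSucc_or_eq_last j with ⟨k, rfl⟩ | rfl
  · rw [Function.update_of_ne (Fin.castSucc_lt_last k).ne, Fin.snoc_castSucc]
    rfl
  · simp

lemma init_update_castSucc {n : ℕ} (z : Fin (n + 1) → Bool) (i : Fin n) (b : Bool) :
    Fin.init (Function.update z i.castSucc b) = Function.update (Fin.init z) i b := by
  funext k
  by_cases h : k = i
  · subst h; simp [Fin.init]
  · rw [Function.update_of_ne h, Fin.init, Fin.init,
      Function.update_of_ne (fun hc => h (Fin.castSucc_injective _ hc))]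

theorem stmt2 {n : ℕ} (f : (Fin (n + 1) → Bool) → (Fin (n + 1) → Bool))
    (hno : ∀ (x : Fin n → Bool) (a b : Bool),
      f (Fin.snoc x a) (Fin.last n) = f (Fin.snoc x b) (Fin.last n))
    (A : Set (Fin (n + 1) → Bool)) (hA : isTrapSpace f A) :
    isTrapSpace (reduced f) (Fin.init '' A) := by
  obtain ⟨⟨x, I, hAI⟩, htrap⟩ := hA
  constructor
  · refine ⟨Fin.init x, {i : Fin n | i.castSucc ∈ I}, ?_⟩
    ext y
    constructor
    · rintro ⟨z, hz, rfl⟩ j hj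
      rw [hAI] at hz
      exact hz j.castSucc hj
    · intro hy
      refine ⟨Fin.snoc y (x (Fin.last n)), ?_, Fin.init_snoc _ _⟩
      rw [hAI]
      intro i hi
      rcases Fin.eq_castSucc_or_eq_last i with ⟨j, rfl⟩ | rfl
      · rw [Fin.snoc_castSucc]
        exact hy j hi
      · simp
  · rintro y ⟨z, hz, rfl⟩ w ⟨i, hne, rfl⟩
    set c := lastComp f (Fin.init z) with hc
    have hz' : Fin.snoc (Fin.init z) c ∈ A := by
      by_cases h : z (Fin.last n) = c
      · rw [← h, Fin.snoc_init_self]; exact hz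
      · have hfz : f z (Fin.last n) = c := by
          have := hno (Fin.init z) (z (Fin.last n)) false
          rw [Fin.snoc_init_self] at this
          exact this
        have step : asyncStep f z (Function.update z (Fin.last n) (!z (Fin.last n))) :=
          ⟨Fin.last n, by rw [hfz]; exact fun hc' => h hc'.symm, rfl⟩
        have hmem := htrap z hz _ step
        have hb : (!z (Fin.last n)) = c := by
          revert h; cases z (Fin.last n) <;> cases c <;> simp
        rwa [update_last_eq_snoc, hb] at hmem
    have hfi : f (Fin.snoc (Fin.init z) c) i.castSucc ≠ (Fin.snoc (Fin.init z) c) i.castSucc := by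
      rw [Fin.snoc_castSucc]
      exact hne
    have step2 : asyncStep f (Fin.snoc (Fin.init z) c)
        (Function.update (Fin.snoc (Fin.init z) c) i.castSucc (!(Fin.snoc (Fin.init z) c) i.castSucc)) :=
      ⟨i.castSucc, hfi, rfl⟩
    have hmem2 := htrap _ hz' _ step2
    refine ⟨_, hmem2, ?_⟩
    rw [init_update_castSucc, Fin.snoc_castSucc, Fin.init_snoc]
end

section
/- The fixed points of the reduced Boolean Delta-Notch system N over a finite undirected loopless connected graph G are in one-to-one correspondence with the minimal vertex covers of G; explicitly, x ∈ B^L is a fixed point of N if and only if the set {i : x_i = 1} is a minimal (with respect to inclusion) vertex cover of G. -/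
/-- The reduced Boolean Delta-Notch system over the cell graph `G`:
`N_i(n) = ⋁_{j ∈ S(i)} ¬ n_j`. -/
def Nsys {L : ℕ} (G : SimpleGraph (Fin L)) [DecidableRel G.Adj]
    (x : Fin L → Bool) : Fin L → Bool :=
  fun i => decide (∃ j, G.Adj i j ∧ x j = false)

/-- A vertex cover: every edge has an endpoint in `Q`. -/
def isVertexCover {L : ℕ} (G : SimpleGraph (Fin L)) (Q : Set (Fin L)) : Prop :=
  ∀ i j, G.Adj i j → i ∈ Q ∨ j ∈ Q

/-- A minimal vertex cover: no proper subset is a vertex cover. -/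
def isMinimalVertexCover {L : ℕ} (G : SimpleGraph (Fin L)) (Q : Set (Fin L)) : Prop :=
  isVertexCover G Q ∧ ∀ Q' ⊆ Q, isVertexCover G Q' → Q' = Q

theorem stmt3 {L : ℕ} (G : SimpleGraph (Fin L)) [DecidableRel G.Adj]
    (hc : G.Connected) (x : Fin L → Bool) :
    Nsys G x = x ↔ isMinimalVertexCover G {i | x i = true} := by
  classical
  constructor
  · intro h
    have hfix : ∀ i, x i = true ↔ ∃ j, G.Adj i j ∧ x j = false := by
      intro i
      conv_lhs => rw [← congrFun h i]
      simp [Nsys]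
    constructor
    · intro i j hij
      by_contra hcon
      push_neg at hcon
      obtain ⟨hi, hj⟩ := hcon
      simp only [Set.mem_setOf_eq] at hi hj
      exact hi ((hfix i).2 ⟨j, hij, by simpa using hj⟩)
    · intro Q' hQ' hcov
      apply Set.Subset.antisymm hQ'
      intro i hi
      by_contra hi'
      obtain ⟨j, hij, hjf⟩ := (hfix i).1 hi
      have hj : j ∉ Q' := fun hjQ => by
        have := hQ' hjQ; simp [hjf] at this
      rcases hcov i j hij with h1 | h2
      · exact hi' h1
      · exact hj h2
  · rintro ⟨hcov, hmin⟩
    funext i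
    by_cases hxi : x i = true
    · have hex : ∃ j, G.Adj i j ∧ x j = false := by
        by_contra hno
        push_neg at hno
        have hcov' : isVertexCover G ({k | x k = true} \ {i}) := by
          intro a b hab
          rcases hcov a b hab with ha | hb
          · by_cases hai : a = i
            · subst hai
              right
              refine ⟨by simpa using hno b hab, fun hbi => ?_⟩
              simp only [Set.mem_singleton_iff] at hbi
              subst hbi; exact G.irrefl hab
            · exact Or.inl ⟨ha, hai⟩
          · by_cases hbi : b = i
            · subst hbi
              left
              refine ⟨by simpa using hno a hab.symm, fun hai => ?_⟩
              simp only [Set.mem_singleton_iff] at hai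
              subst hai; exact G.irrefl hab
            · exact Or.inr ⟨hb, hbi⟩
        have heq := hmin _ Set.diff_subset hcov'
        have : i ∈ ({k | x k = true} \ {i} : Set (Fin L)) := by rw [heq]; exact hxi
        simp at this
      simp [Nsys, hxi]
      exact hex
    · have hxf : x i = false := by simpa using hxi
      simp only [Nsys, hxf, decide_eq_false_iff_not, not_exists, not_and]
      intro j hij
      rcases hcov i j hij with h | h
      · exact absurd h (by simp [hxf])
      · simp only [Set.mem_setOf_eq] at h
        simp [h]
end

section
/- For the reduced Boolean Delta-Notch system N over a graph with at least 2 vertices, for every vertex i there exists a fixed point x of N with x_i = 0 and x_j = 1 for all neighbours j of i. In particular, if L ≥ 2 then N admits at least two distinct fixed points. -/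
lemma key {L : ℕ} (G : SimpleGraph (Fin L)) [DecidableRel G.Adj] (i : Fin L) :
    ∃ x : Fin L → Bool, Nsys G x = x ∧ x i = false ∧
      ∀ j, G.Adj i j → x j = true := by
  classical
  set 𝒮 : Finset (Finset (Fin L)) :=
    (Finset.univ : Finset (Finset (Fin L))).filter
      (fun A => i ∈ A ∧ ∀ a ∈ A, ∀ b ∈ A, ¬ G.Adj a b) with h𝒮
  have hne : 𝒮.Nonempty := by
    refine ⟨{i}, ?_⟩
    simp only [h𝒮, Finset.mem_filter, Finset.mem_univ, true_and, Finset.mem_singleton]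
    rintro a rfl b rfl
    exact G.loopless.irrefl _
  obtain ⟨A, hA, hmax⟩ : ∃ A ∈ 𝒮, ∀ B ∈ 𝒮, ¬ A < B := by
    obtain ⟨A, hA, hmax⟩ := Finset.exists_maximal hne
    exact ⟨A, hA, fun B hB hlt => hlt.not_ge (hmax hB hlt.le)⟩
  simp only [h𝒮, Finset.mem_filter, Finset.mem_univ, true_and] at hA
  obtain ⟨hiA, hind⟩ := hA
  refine ⟨fun j => decide (j ∉ A), ?_, by simp [hiA], ?_⟩
  · funext j
    show decide (∃ k, G.Adj j k ∧ decide (k ∉ A) = false) = decide (j ∉ A)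
    rw [decide_eq_decide]
    constructor
    · rintro ⟨k, hjk, hk⟩
      rw [decide_eq_false_iff_not, not_not] at hk
      exact fun hj => hind j hj k hk hjk
    · intro hj
      by_contra hno
      push_neg at hno
      have hnoA : ∀ k ∈ A, ¬ G.Adj j k := by
        intro k hk hjk
        exact hno k hjk (by simp [hk])
      have hind' : ∀ a ∈ insert j A, ∀ b ∈ insert j A, ¬ G.Adj a b := by
        intro a ha b hb hab
        rcases Finset.mem_insert.1 ha with rfl | ha' <;>
          rcases Finset.mem_insert.1 hb with rfl | hb'
        · exact G.loopless.irrefl _ hab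
        · exact hnoA _ hb' hab
        · exact hnoA _ ha' hab.symm
        · exact hind _ ha' _ hb' hab
      have hmem : insert j A ∈ 𝒮 := by
        simp only [h𝒮, Finset.mem_filter, Finset.mem_univ, true_and]
        exact ⟨Finset.mem_insert_of_mem hiA, hind'⟩
      exact hmax _ hmem (Finset.ssubset_insert hj)
  · intro j hij
    have : j ∉ A := fun hj => hind i hiA j hj hij
    simp [this]

theorem stmt4 {L : ℕ} (G : SimpleGraph (Fin L)) [DecidableRel G.Adj]
    (hL : 2 ≤ L) (hc : G.Connected) :
    (∀ i : Fin L, ∃ x : Fin L → Bool, Nsys G x = x ∧ x i = false ∧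
        ∀ j, G.Adj i j → x j = true) ∧
      ∃ x y : Fin L → Bool, Nsys G x = x ∧ Nsys G y = y ∧ x ≠ y := by
  refine ⟨fun i => key G i, ?_⟩
  have h01 : (⟨0, by omega⟩ : Fin L) ≠ ⟨1, by omega⟩ := by simp [Fin.ext_iff]
  obtain ⟨w⟩ := hc.preconnected ⟨0, by omega⟩ ⟨1, by omega⟩
  obtain ⟨b, hadj⟩ : ∃ b, G.Adj ⟨0, by omega⟩ b := by
    cases w with
    | cons h p => exact ⟨_, h⟩
  obtain ⟨x, hx, hx0, hxn⟩ := key G ⟨0, by omega⟩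
  obtain ⟨y, hy, hy0, _⟩ := key G b
  refine ⟨x, y, hx, hy, fun h => ?_⟩
  have := hxn b hadj
  rw [h, hy0] at this
  exact Bool.false_ne_true this
end

section
/- The asynchronous state transition graph of the reduced Boolean Delta-Notch system N contains no cyclic path: the energy function E(x) = -(1/2) xᵀ A x + bᵀ x, where A_{ij} = -1 if j ∈ S(i) and 0 otherwise, and b_i = -|S(i)| + 1/2, is strictly decreasing along every edge of the asynchronous dynamics. -/
/-- The energy function `E(x) = -(1/2) xᵀ A x + bᵀ x`, where `A_{ij} = -1` if `j ∈ S(i)`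
and `0` otherwise, and `b_i = -|S(i)| + 1/2`. -/
noncomputable def energy {L : ℕ} (G : SimpleGraph (Fin L)) [DecidableRel G.Adj]
    (x : Fin L → Bool) : ℝ :=
  -(1 / 2) * ∑ i, ∑ j, (if G.Adj i j then (-1 : ℝ) else 0) *
      (if x i then (1 : ℝ) else 0) * (if x j then (1 : ℝ) else 0)
    + ∑ i, (-(G.degree i : ℝ) + 1 / 2) * (if x i then (1 : ℝ) else 0)

lemma degree_eq_sum {L : ℕ} (G : SimpleGraph (Fin L)) [DecidableRel G.Adj] (i : Fin L) :
    (G.degree i : ℝ) = ∑ j, (if G.Adj i j then (1 : ℝ) else 0) := by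
  rw [← SimpleGraph.card_neighborFinset_eq_degree]
  have : G.neighborFinset i = Finset.univ.filter (G.Adj i) := by
    ext j; simp [SimpleGraph.mem_neighborFinset]
  rw [this, Finset.card_filter]
  push_cast
  simp

lemma double_sum_update {n : ℕ} (A : Fin n → Fin n → ℝ) (v w : Fin n → ℝ) (i : Fin n) (d : ℝ)
    (hw : ∀ j, w j = v j + d * (if j = i then 1 else 0))
    (hAi : A i i = 0) (hsym : ∀ a, A a i = A i a) :
    ∑ a, ∑ b, A a b * w a * w b
      = (∑ a, ∑ b, A a b * v a * v b) + 2 * (d * ∑ b, A i b * v b) := by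
  have e1 : ∀ a b : Fin n, A a b * w a * w b
      = A a b * v a * v b
        + d * ((if a = i then (1:ℝ) else 0) * (A a b * v b))
        + (d * ((if b = i then (1:ℝ) else 0) * (A a b * v a))
          + d * d * ((if a = i then (1:ℝ) else 0) * ((if b = i then (1:ℝ) else 0) * A a b))) := by
    intro a b; rw [hw a, hw b]; ring
  have h2 : (∑ a, ∑ b, d * ((if a = i then (1:ℝ) else 0) * (A a b * v b)))
      = d * ∑ b, A i b * v b := by
    simp only [← Finset.mul_sum]
    congr 1
    rw [Finset.sum_eq_single i]
    · simp
    · intro b _ hb; simp [hb]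
    · simp
  have h3 : (∑ a, ∑ b, d * ((if b = i then (1:ℝ) else 0) * (A a b * v a)))
      = d * ∑ b, A i b * v b := by
    have hin : ∀ a, (∑ b, d * ((if b = i then (1:ℝ) else 0) * (A a b * v a)))
        = d * (A a i * v a) := by
      intro a
      rw [← Finset.mul_sum, Finset.sum_eq_single i]
      · simp
      · intro b _ hb; simp [hb]
      · simp
    simp only [hin, ← Finset.mul_sum]
    congr 1
    exact Finset.sum_congr rfl fun a _ => by rw [hsym]
  have h4 : (∑ a, ∑ b, d * d *
      ((if a = i then (1:ℝ) else 0) * ((if b = i then (1:ℝ) else 0) * A a b))) = 0 := by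
    refine Finset.sum_eq_zero fun a _ => Finset.sum_eq_zero fun b _ => ?_
    by_cases ha : a = i
    · by_cases hb : b = i
      · subst ha; subst hb; simp [hAi]
      · simp [hb]
    · simp [ha]
  calc ∑ a, ∑ b, A a b * w a * w b
      = ∑ a, ∑ b, (A a b * v a * v b
          + d * ((if a = i then (1:ℝ) else 0) * (A a b * v b))
          + (d * ((if b = i then (1:ℝ) else 0) * (A a b * v a))
            + d * d * ((if a = i then (1:ℝ) else 0) * ((if b = i then (1:ℝ) else 0) * A a b)))) := by
        simp only [e1]
    _ = (∑ a, ∑ b, A a b * v a * v b)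
          + (∑ a, ∑ b, d * ((if a = i then (1:ℝ) else 0) * (A a b * v b)))
          + ((∑ a, ∑ b, d * ((if b = i then (1:ℝ) else 0) * (A a b * v a)))
            + (∑ a, ∑ b, d * d *
              ((if a = i then (1:ℝ) else 0) * ((if b = i then (1:ℝ) else 0) * A a b)))) := by
        simp only [Finset.sum_add_distrib]
    _ = (∑ a, ∑ b, A a b * v a * v b) + 2 * (d * ∑ b, A i b * v b) := by
        rw [h2, h3, h4]; ring

lemma sum_update {n : ℕ} (c v w : Fin n → ℝ) (i : Fin n) (d : ℝ)
    (hw : ∀ j, w j = v j + d * (if j = i then 1 else 0)) :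
    ∑ a, c a * w a = (∑ a, c a * v a) + d * c i := by
  have e1 : ∀ a, c a * w a = c a * v a + d * ((if a = i then (1:ℝ) else 0) * c a) := by
    intro a; rw [hw a]; ring
  have h2 : (∑ a, d * ((if a = i then (1:ℝ) else 0) * c a)) = d * c i := by
    rw [← Finset.mul_sum, Finset.sum_eq_single i]
    · simp
    · intro b _ hb; simp [hb]
    · simp
  simp only [e1, Finset.sum_add_distrib, h2]

lemma energy_update_eq {L : ℕ} (G : SimpleGraph (Fin L)) [DecidableRel G.Adj]
    (x : Fin L → Bool) (i : Fin L) :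
    energy G (Function.update x i (!x i))
      = energy G x + (if x i then (-1 : ℝ) else 1) *
        ((∑ j, (if G.Adj i j then (1 : ℝ) else 0) * (if x j then (1 : ℝ) else 0))
          - (G.degree i : ℝ) + 1 / 2) := by
  classical
  set d : ℝ := if x i then -1 else 1 with hd
  have hw : ∀ j, (if Function.update x i (!x i) j then (1 : ℝ) else 0)
      = (if x j then (1 : ℝ) else 0) + d * (if j = i then (1 : ℝ) else 0) := by
    intro j
    rcases eq_or_ne j i with rfl | hji
    · simp only [Function.update_self, if_pos rfl, mul_one, hd]
      cases h : x j <;> simp [h]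
    · simp [Function.update_of_ne hji, hji]
  have key := double_sum_update (fun a b => if G.Adj a b then (-1 : ℝ) else 0)
    (fun j => if x j then (1 : ℝ) else 0)
    (fun j => if Function.update x i (!x i) j then (1 : ℝ) else 0) i d hw
    (by simp) (fun a => by simp only [G.adj_comm])
  have key2 := sum_update (fun a => -(G.degree a : ℝ) + 1 / 2)
    (fun j => if x j then (1 : ℝ) else 0)
    (fun j => if Function.update x i (!x i) j then (1 : ℝ) else 0) i d hw
  have hneg : (∑ b, (if G.Adj i b then (-1 : ℝ) else 0) * (if x b then (1 : ℝ) else 0))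
      = -∑ j, (if G.Adj i j then (1 : ℝ) else 0) * (if x j then (1 : ℝ) else 0) := by
    rw [← Finset.sum_neg_distrib]
    refine Finset.sum_congr rfl fun b _ => ?_
    split_ifs <;> ring
  simp only [energy]
  rw [key, key2, hneg]
  ring

theorem stmt5 {L : ℕ} (G : SimpleGraph (Fin L)) [DecidableRel G.Adj]
    (hc : G.Connected) :
    (∀ x y : Fin L → Bool, asyncStep (Nsys G) x y → energy G y < energy G x) ∧
      ∀ x : Fin L → Bool, ¬ Relation.TransGen (asyncStep (Nsys G)) x x := by
  have hdec : ∀ x y : Fin L → Bool, asyncStep (Nsys G) x y → energy G y < energy G x := by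
    intro x y hxy
    obtain ⟨i, hNi, rfl⟩ := hxy
    rw [energy_update_eq]
    set S : ℝ := ∑ j, (if G.Adj i j then (1 : ℝ) else 0) * (if x j then (1 : ℝ) else 0) with hS
    cases hxi : x i with
    | true =>
      have hall : ∀ j, G.Adj i j → x j = true := by
        intro j hj
        by_contra hxj
        have : Nsys G x i = true := by
          simp only [Nsys, decide_eq_true_eq]
          exact ⟨j, hj, by simpa using hxj⟩
        rw [this, hxi] at hNi; exact hNi rfl
      have hSdeg : S = (G.degree i : ℝ) := by
        rw [hS, degree_eq_sum]
        refine Finset.sum_congr rfl fun j _ => ?_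
        by_cases hj : G.Adj i j
        · simp [hj, hall j hj]
        · simp [hj]
      rw [if_pos rfl]
      nlinarith [hSdeg]
    | false =>
      have hex : ∃ j, G.Adj i j ∧ x j = false := by
        by_contra hno
        have : Nsys G x i = false := by
          simp only [Nsys, decide_eq_false_iff_not]
          exact hno
        rw [this, hxi] at hNi; exact hNi rfl
      obtain ⟨j0, hj0, hxj0⟩ := hex
      have hbound : S ≤ (G.degree i : ℝ) - 1 := by
        have key : (1 : ℝ) ≤ ∑ j, ((if G.Adj i j then (1 : ℝ) else 0)
            - (if G.Adj i j then (1 : ℝ) else 0) * (if x j then (1 : ℝ) else 0)) := by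
          have h0 : ∀ j ∈ Finset.univ, (0:ℝ) ≤ (if G.Adj i j then (1 : ℝ) else 0)
              - (if G.Adj i j then (1 : ℝ) else 0) * (if x j then (1 : ℝ) else 0) := by
            intro j _; split_ifs <;> norm_num
          have := Finset.single_le_sum h0 (Finset.mem_univ j0)
          simpa [hj0, hxj0] using this
        rw [Finset.sum_sub_distrib] at key
        rw [hS, degree_eq_sum]
        linarith
      rw [if_neg (by simp)]
      linarith
  refine ⟨hdec, fun x hx => ?_⟩
  have key : ∀ y : Fin L → Bool, Relation.TransGen (asyncStep (Nsys G)) x y →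
      energy G y < energy G x := by
    intro y h
    induction h with
    | single h => exact hdec _ _ h
    | tail _ h ih => exact lt_trans (hdec _ _ h) ih
  exact lt_irrefl _ (key x hx)
end

section
/- For every state x ∈ B^L that is not a fixed point of the reduced Boolean Delta-Notch system N, there is a path in the asynchronous dynamics of N from x to some fixed point of N. -/
section Aux

variable {L : ℕ} (G : SimpleGraph (Fin L)) [DecidableRel G.Adj]

/-- Set of adjacent ordered pairs that are both `false`. -/
def Eset (x : Fin L → Bool) : Finset (Fin L × Fin L) :=
  Finset.univ.filter fun p => G.Adj p.1 p.2 ∧ x p.1 = false ∧ x p.2 = false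

/-- Set of unstable coordinates. -/
def Uset (x : Fin L → Bool) : Finset (Fin L) :=
  Finset.univ.filter fun i => Nsys G x i ≠ x i

def meas (x : Fin L → Bool) : ℕ := (L + 1) * (Eset G x).card + (Uset G x).card

lemma Uset_card_le (x : Fin L → Bool) : (Uset G x).card ≤ L := by
  simpa using Finset.card_le_univ (Uset G x)

lemma Nsys_true_iff (x : Fin L → Bool) (i : Fin L) :
    Nsys G x i = true ↔ ∃ j, G.Adj i j ∧ x j = false := by
  simp [Nsys]

lemma step_decrease (x : Fin L → Bool) (hx : Nsys G x ≠ x) :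
    ∃ x', asyncStep (Nsys G) x x' ∧ meas G x' < meas G x := by
  have hex : ∃ i, Nsys G x i ≠ x i := by
    by_contra h
    push_neg at h
    exact hx (funext h)
  by_cases hA : ∃ i, Nsys G x i ≠ x i ∧ x i = false
  · -- Case A: an unstable false node; flipping it to true kills a false-false pair
    obtain ⟨i, hi, hif⟩ := hA
    have hNi : Nsys G x i = true := by
      cases h : Nsys G x i with
      | false => exact absurd (h.trans hif.symm) hi
      | true => rfl
    obtain ⟨j, hij, hjf⟩ := (Nsys_true_iff G x i).1 hNi
    set x' := Function.update x i (!x i) with hx'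
    have hxi' : x' i = true := by simp [hx', hif]
    have hkeep : ∀ k, k ≠ i → x' k = x k := fun k hk => Function.update_of_ne hk _ _
    refine ⟨x', ⟨i, hi, rfl⟩, ?_⟩
    -- Eset x' ⊂ Eset x
    have hsub : Eset G x' ⊆ Eset G x := by
      intro p hp
      simp only [Eset, Finset.mem_filter, Finset.mem_univ, true_and] at hp ⊢
      obtain ⟨hadj, h1, h2⟩ := hp
      have hp1 : p.1 ≠ i := by rintro rfl; rw [hxi'] at h1; exact absurd h1 (by simp)
      have hp2 : p.2 ≠ i := by rintro rfl; rw [hxi'] at h2; exact absurd h2 (by simp)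
      rw [hkeep _ hp1] at h1; rw [hkeep _ hp2] at h2
      exact ⟨hadj, h1, h2⟩
    have hmem : (i, j) ∈ Eset G x := by
      simp only [Eset, Finset.mem_filter, Finset.mem_univ, true_and]
      exact ⟨hij, hif, hjf⟩
    have hnmem : (i, j) ∉ Eset G x' := by
      simp only [Eset, Finset.mem_filter, Finset.mem_univ, true_and]
      rintro ⟨-, h1, -⟩
      rw [hxi'] at h1; exact absurd h1 (by simp)
    have hlt : (Eset G x').card < (Eset G x).card :=
      Finset.card_lt_card ⟨hsub, fun h => hnmem (h hmem)⟩
    have hU : (Uset G x').card ≤ L := Uset_card_le G x'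
    calc meas G x' = (L + 1) * (Eset G x').card + (Uset G x').card := rfl
      _ < (L + 1) * (Eset G x').card + (L + 1) := by omega
      _ = (L + 1) * ((Eset G x').card + 1) := by ring
      _ ≤ (L + 1) * (Eset G x).card := Nat.mul_le_mul_left _ hlt
      _ ≤ meas G x := Nat.le_add_right _ _
  · -- Case B: every unstable node is true with all-true neighbours
    push_neg at hA
    obtain ⟨i, hi⟩ := hex
    have hit : x i = true := by simpa using hA i hi
    have hNi : Nsys G x i = false := by
      cases h : Nsys G x i with
      | false => rfl
      | true => exact absurd (h.trans hit.symm) hi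
    have hnb : ∀ j, G.Adj i j → x j = true := by
      intro j hij
      by_contra h
      have : Nsys G x i = true := (Nsys_true_iff G x i).2 ⟨j, hij, by simpa using h⟩
      rw [this] at hNi; exact absurd hNi (by simp)
    set x' := Function.update x i (!x i) with hx'
    have hxi' : x' i = false := by simp [hx', hit]
    have hkeep : ∀ k, k ≠ i → x' k = x k := fun k hk => Function.update_of_ne hk _ _
    refine ⟨x', ⟨i, hi, rfl⟩, ?_⟩
    -- Eset x' ⊆ Eset x
    have hEsub : Eset G x' ⊆ Eset G x := by
      intro p hp
      simp only [Eset, Finset.mem_filter, Finset.mem_univ, true_and] at hp ⊢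
      obtain ⟨hadj, h1, h2⟩ := hp
      have hp1 : p.1 ≠ i := by
        intro he
        have h2i : p.2 ≠ i := by
          intro h2e; rw [he, h2e] at hadj; exact G.loopless.irrefl i hadj
        rw [he] at hadj
        rw [hkeep _ h2i, hnb _ hadj] at h2; exact absurd h2 (by simp)
      have hp2 : p.2 ≠ i := by
        intro he
        rw [he] at hadj
        rw [hkeep _ hp1, hnb _ hadj.symm] at h1; exact absurd h1 (by simp)
      rw [hkeep _ hp1] at h1; rw [hkeep _ hp2] at h2
      exact ⟨hadj, h1, h2⟩
    -- Uset x' ⊂ Uset x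
    have hUsub : Uset G x' ⊆ Uset G x := by
      intro j hj
      simp only [Uset, Finset.mem_filter, Finset.mem_univ, true_and] at hj ⊢
      by_cases hji : j = i
      · subst hji
        exfalso
        apply hj
        rw [hxi']
        cases h : Nsys G x' j with
        | false => rfl
        | true =>
          obtain ⟨k, hjk, hkf⟩ := (Nsys_true_iff G x' j).1 h
          have hki : k ≠ j := by
            intro hk; rw [hk] at hjk; exact G.loopless.irrefl j hjk
          rw [hkeep _ hki, hnb _ hjk] at hkf; exact absurd hkf (by simp)
      · by_cases hadj : G.Adj j i
        · exfalso
          apply hj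
          have hjt : x' j = true := by rw [hkeep _ hji]; exact hnb _ hadj.symm
          have : Nsys G x' j = true := (Nsys_true_iff G x' j).2 ⟨i, hadj, hxi'⟩
          rw [this, hjt]
        · -- N at j unchanged
          have hsame : Nsys G x' j = Nsys G x j := by
            simp only [Nsys]
            congr 1
            apply propext
            constructor <;> rintro ⟨k, hjk, hkf⟩ <;> refine ⟨k, hjk, ?_⟩
            · have hki : k ≠ i := fun hk => hadj (hk ▸ hjk)
              rwa [hkeep _ hki] at hkf
            · have hki : k ≠ i := fun hk => hadj (hk ▸ hjk)
              rwa [hkeep _ hki]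
          rw [hsame, hkeep _ hji] at hj
          exact hj
    have hiU : i ∈ Uset G x := by
      simp only [Uset, Finset.mem_filter, Finset.mem_univ, true_and]; exact hi
    have hiU' : i ∉ Uset G x' := by
      simp only [Uset, Finset.mem_filter, Finset.mem_univ, true_and]
      intro h
      apply h
      rw [hxi']
      cases h' : Nsys G x' i with
      | false => rfl
      | true =>
        obtain ⟨k, hik, hkf⟩ := (Nsys_true_iff G x' i).1 h'
        have hki : k ≠ i := fun hk => G.loopless.irrefl i (hk ▸ hik)
        rw [hkeep _ hki, hnb _ hik] at hkf; exact absurd hkf (by simp)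
    have hUlt : (Uset G x').card < (Uset G x).card :=
      Finset.card_lt_card ⟨hUsub, fun h => hiU' (h hiU)⟩
    have hElt : (Eset G x').card ≤ (Eset G x).card := Finset.card_le_card hEsub
    exact Nat.add_lt_add_of_le_of_lt (Nat.mul_le_mul_left _ hElt) hUlt

theorem reach_fixed (x : Fin L → Bool) :
    ∃ y : Fin L → Bool, Nsys G y = y ∧
      Relation.ReflTransGen (asyncStep (Nsys G)) x y := by
  by_cases h : Nsys G x = x
  · exact ⟨x, h, .refl⟩
  · obtain ⟨x', hs, hm⟩ := step_decrease G x h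
    obtain ⟨y, hy, hr⟩ := reach_fixed x'
    exact ⟨y, hy, .head hs hr⟩
termination_by meas G x
decreasing_by exact hm

end Aux

theorem stmt6 {L : ℕ} (G : SimpleGraph (Fin L)) [DecidableRel G.Adj]
    (hc : G.Connected) (x : Fin L → Bool) (hx : Nsys G x ≠ x) :
    ∃ y : Fin L → Bool, Nsys G y = y ∧
      Relation.ReflTransGen (asyncStep (Nsys G)) x y :=
  reach_fixed G x
end

section
/- For every state (n,d) ∈ B^{2L} that is not a fixed point of the full Boolean Delta-Notch system F, there is a path in the asynchronous dynamics of F from (n,d) to some fixed point of F. -/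
/-- The full Boolean Delta-Notch system over the cell graph `G`, on states in `B^{2L}`:
the Notch variable of cell `i` is indexed by `Sum.inl i`, the Delta variable by `Sum.inr i`.
Notch is activated by Delta in some neighbouring cell, Delta is inhibited by Notch in the
same cell. -/
def Fsys {L : ℕ} (G : SimpleGraph (Fin L)) [DecidableRel G.Adj]
    (x : Fin L ⊕ Fin L → Bool) : Fin L ⊕ Fin L → Bool :=
  Sum.elim (fun i => decide (∃ j, G.Adj i j ∧ x (Sum.inr j) = true))
    (fun i => !x (Sum.inl i))

namespace DNaux

variable {L : ℕ}

/-- cells with Notch and Delta both on -/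
def f1 (x : Fin L ⊕ Fin L → Bool) : Finset (Fin L) :=
  Finset.univ.filter (fun i => x (Sum.inl i) = true ∧ x (Sum.inr i) = true)

/-- adjacent ordered pairs with Delta on at both ends -/
def f2 (G : SimpleGraph (Fin L)) [DecidableRel G.Adj]
    (x : Fin L ⊕ Fin L → Bool) : Finset (Fin L × Fin L) :=
  Finset.univ.filter
    (fun p => G.Adj p.1 p.2 ∧ x (Sum.inr p.1) = true ∧ x (Sum.inr p.2) = true)

/-- Delta-off cells having no neighbour with Delta on -/
def f3 (G : SimpleGraph (Fin L)) [DecidableRel G.Adj]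
    (x : Fin L ⊕ Fin L → Bool) : Finset (Fin L) :=
  Finset.univ.filter
    (fun i => x (Sum.inr i) = false ∧ ∀ j, G.Adj i j → x (Sum.inr j) = false)

/-- cells with Notch and Delta both off -/
def f4 (x : Fin L ⊕ Fin L → Bool) : Finset (Fin L) :=
  Finset.univ.filter (fun i => x (Sum.inl i) = false ∧ x (Sum.inr i) = false)

/-- the potential -/
def mu (G : SimpleGraph (Fin L)) [DecidableRel G.Adj]
    (x : Fin L ⊕ Fin L → Bool) : ℕ :=
  (f1 x).card * (L+1)^3 + (f2 G x).card * (L+1)^2 + (f3 G x).card * (L+1) + (f4 x).card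

lemma card_le_L (p : Fin L → Prop) [DecidablePred p] :
    (Finset.univ.filter p).card ≤ L :=
  le_trans (Finset.card_filter_le _ _) (by simp)

variable {G : SimpleGraph (Fin L)} [DecidableRel G.Adj] {x y : Fin L ⊕ Fin L → Bool}

lemma muA (h1 : (f1 y).card < (f1 x).card) (h2 : (f2 G y).card ≤ (f2 G x).card) :
    mu G y < mu G x := by
  have b3 : (f3 G y).card ≤ L := card_le_L _
  have b4 : (f4 y).card ≤ L := card_le_L _
  unfold mu
  calc (f1 y).card * (L+1)^3 + (f2 G y).card * (L+1)^2 + (f3 G y).card * (L+1) + (f4 y).card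
      ≤ (f1 y).card * (L+1)^3 + (f2 G x).card * (L+1)^2 + L*(L+1) + L := by gcongr
    _ < ((f1 y).card + 1) * (L+1)^3 + (f2 G x).card * (L+1)^2 := by nlinarith
    _ ≤ (f1 x).card * (L+1)^3 + (f2 G x).card * (L+1)^2 := by gcongr; omega
    _ ≤ _ := by omega

lemma muB (h1 : (f1 y).card ≤ (f1 x).card) (h2 : (f2 G y).card < (f2 G x).card) :
    mu G y < mu G x := by
  have b3 : (f3 G y).card ≤ L := card_le_L _
  have b4 : (f4 y).card ≤ L := card_le_L _
  unfold mu
  calc (f1 y).card * (L+1)^3 + (f2 G y).card * (L+1)^2 + (f3 G y).card * (L+1) + (f4 y).card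
      ≤ (f1 x).card * (L+1)^3 + (f2 G y).card * (L+1)^2 + L*(L+1) + L := by gcongr
    _ < (f1 x).card * (L+1)^3 + ((f2 G y).card + 1) * (L+1)^2 := by nlinarith
    _ ≤ (f1 x).card * (L+1)^3 + (f2 G x).card * (L+1)^2 := by gcongr; omega
    _ ≤ _ := by omega

lemma muC (h1 : (f1 y).card ≤ (f1 x).card) (h2 : (f2 G y).card ≤ (f2 G x).card)
    (h3 : (f3 G y).card < (f3 G x).card) : mu G y < mu G x := by
  have b4 : (f4 y).card ≤ L := card_le_L _
  unfold mu
  calc (f1 y).card * (L+1)^3 + (f2 G y).card * (L+1)^2 + (f3 G y).card * (L+1) + (f4 y).card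
      ≤ (f1 x).card * (L+1)^3 + (f2 G x).card * (L+1)^2 + (f3 G y).card * (L+1) + L := by gcongr
    _ < (f1 x).card * (L+1)^3 + (f2 G x).card * (L+1)^2 + ((f3 G y).card + 1) * (L+1) := by
        nlinarith
    _ ≤ (f1 x).card * (L+1)^3 + (f2 G x).card * (L+1)^2 + (f3 G x).card * (L+1) := by
        gcongr; omega
    _ ≤ _ := by omega

lemma muD (h1 : (f1 y).card ≤ (f1 x).card) (h2 : (f2 G y).card ≤ (f2 G x).card)
    (h3 : (f3 G y).card ≤ (f3 G x).card) (h4 : (f4 y).card < (f4 x).card) :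
    mu G y < mu G x := by
  have e1 := Nat.mul_le_mul_right ((L+1)^3) h1
  have e2 := Nat.mul_le_mul_right ((L+1)^2) h2
  have e3 := Nat.mul_le_mul_right (L+1) h3
  unfold mu
  omega

/-- Main lemma: from every state a fixed point is asynchronously reachable. -/
lemma reach (G : SimpleGraph (Fin L)) [DecidableRel G.Adj] :
    ∀ N (x : Fin L ⊕ Fin L → Bool), mu G x < N →
      ∃ y, Fsys G y = y ∧ Relation.ReflTransGen (asyncStep (Fsys G)) x y := by
  intro N
  induction N with
  | zero => intro x h; omega
  | succ N ih =>
    intro x hN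
    -- generic recursion helper
    have step : ∀ y, Relation.ReflTransGen (asyncStep (Fsys G)) x y → mu G y < mu G x →
        ∃ z, Fsys G z = z ∧ Relation.ReflTransGen (asyncStep (Fsys G)) x z := by
      intro y hxy hmu
      obtain ⟨z, hz, hyz⟩ := ih y (by omega)
      exact ⟨z, hz, hxy.trans hyz⟩
    by_cases hA : ∃ i, x (Sum.inl i) = true ∧ x (Sum.inr i) = true
    · -- Move A : switch Delta of i off
      obtain ⟨i, hni, hdi⟩ := hA
      set y : Fin L ⊕ Fin L → Bool := Function.update x (Sum.inr i) false with hy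
      have yinl : ∀ k, y (Sum.inl k) = x (Sum.inl k) := fun k =>
        Function.update_of_ne (by simp) _ _
      have yinr : ∀ k, k ≠ i → y (Sum.inr k) = x (Sum.inr k) := fun k h =>
        Function.update_of_ne (by simp [h]) _ _
      have yi : y (Sum.inr i) = false := Function.update_self _ _ _
      have hstep : asyncStep (Fsys G) x y :=
        ⟨Sum.inr i, by simp [Fsys, hni, hdi], by rw [hy, hdi]; rfl⟩
      refine step y (Relation.ReflTransGen.single hstep) (muA ?_ ?_)
      · refine Finset.card_lt_card ((Finset.ssubset_iff_of_subset ?_).mpr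
          ⟨i, by simp [f1, hni, hdi], by simp [f1, yi]⟩)
        intro k hk
        simp only [f1, Finset.mem_filter, Finset.mem_univ, true_and] at hk ⊢
        have hki : k ≠ i := by rintro rfl; rw [yi] at hk; exact absurd hk.2 (by simp)
        rw [yinl, yinr k hki] at hk; exact hk
      · apply Finset.card_le_card
        intro p hp
        simp only [f2, Finset.mem_filter, Finset.mem_univ, true_and] at hp ⊢
        obtain ⟨hadj, h1, h2⟩ := hp
        have hp1 : p.1 ≠ i := by rintro h; rw [h, yi] at h1; exact absurd h1 (by simp)
        have hp2 : p.2 ≠ i := by rintro h; rw [h, yi] at h2; exact absurd h2 (by simp)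
        rw [yinr _ hp1] at h1; rw [yinr _ hp2] at h2
        exact ⟨hadj, h1, h2⟩
    · by_cases hB : ∃ i j, G.Adj i j ∧ x (Sum.inr i) = true ∧ x (Sum.inr j) = true
      · -- Move B : j has Delta on and a neighbour with Delta on; switch Notch of j on,
        -- then Delta of j off
        obtain ⟨i, j, hadj, hdi, hdj⟩ := hB
        have hnj : x (Sum.inl j) = false := by
          by_contra h
          exact hA ⟨j, by simpa using h, hdj⟩
        set x1 : Fin L ⊕ Fin L → Bool := Function.update x (Sum.inl j) true with hx1
        have x1inr : ∀ k, x1 (Sum.inr k) = x (Sum.inr k) := fun k =>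
          Function.update_of_ne (by simp) _ _
        have x1j : x1 (Sum.inl j) = true := Function.update_self _ _ _
        have hstep1 : asyncStep (Fsys G) x x1 := by
          refine ⟨Sum.inl j, ?_, by rw [hx1, hnj]; rfl⟩
          simp only [Fsys, Sum.elim_inl, hnj]
          simp only [ne_eq, decide_eq_false_iff_not, not_not]
          exact ⟨i, hadj.symm, hdi⟩
        set y : Fin L ⊕ Fin L → Bool := Function.update x1 (Sum.inr j) false with hy
        have yinl : ∀ k, y (Sum.inl k) = x1 (Sum.inl k) := fun k =>
          Function.update_of_ne (by simp) _ _
        have yinr : ∀ k, k ≠ j → y (Sum.inr k) = x (Sum.inr k) := fun k h => by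
          rw [hy, Function.update_of_ne (by simp [h]), x1inr]
        have yj : y (Sum.inr j) = false := Function.update_self _ _ _
        have hstep2 : asyncStep (Fsys G) x1 y := by
          refine ⟨Sum.inr j, ?_, ?_⟩
          · simp [Fsys, x1j, x1inr, hdj]
          · rw [hy, x1inr, hdj]; rfl
        refine step y ((Relation.ReflTransGen.single hstep1).tail hstep2) (muB ?_ ?_)
        · apply Finset.card_le_card
          intro k hk
          simp only [f1, Finset.mem_filter, Finset.mem_univ, true_and] at hk ⊢
          have hkj : k ≠ j := by rintro rfl; rw [yj] at hk; exact absurd hk.2 (by simp)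
          rw [yinl, hx1, Function.update_of_ne (by simp [hkj])] at hk
          rw [yinr k hkj] at hk
          exact hk
        · refine Finset.card_lt_card ((Finset.ssubset_iff_of_subset ?_).mpr
            ⟨(j, i), by simp [f2, hadj.symm, hdi, hdj], by simp [f2, yj]⟩)
          intro p hp
          simp only [f2, Finset.mem_filter, Finset.mem_univ, true_and] at hp ⊢
          obtain ⟨hpadj, h1, h2⟩ := hp
          have hp1 : p.1 ≠ j := by rintro h; rw [h, yj] at h1; exact absurd h1 (by simp)
          have hp2 : p.2 ≠ j := by rintro h; rw [h, yj] at h2; exact absurd h2 (by simp)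
          rw [yinr _ hp1] at h1; rw [yinr _ hp2] at h2
          exact ⟨hpadj, h1, h2⟩
      · by_cases hC : ∃ i, x (Sum.inr i) = false ∧ ∀ j, G.Adj i j → x (Sum.inr j) = false
        · -- Move C : i and all its neighbours have Delta off; switch Notch of i off
          -- (if needed), then Delta of i on
          obtain ⟨i, hdi, hnbr⟩ := hC
          set x1 : Fin L ⊕ Fin L → Bool := Function.update x (Sum.inl i) false with hx1
          have x1inr : ∀ k, x1 (Sum.inr k) = x (Sum.inr k) := fun k =>
            Function.update_of_ne (by simp) _ _
          have x1i : x1 (Sum.inl i) = false := Function.update_self _ _ _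
          have hx1r : Relation.ReflTransGen (asyncStep (Fsys G)) x x1 ∨ x1 = x := by
            by_cases hni : x (Sum.inl i) = true
            · left
              refine Relation.ReflTransGen.single ⟨Sum.inl i, ?_, by rw [hx1, hni]; rfl⟩
              simp only [Fsys, Sum.elim_inl, hni, ne_eq, decide_eq_true_eq]
              intro ⟨j, haj, hj⟩
              exact absurd (hnbr j haj) (by simp [hj])
            · right
              rw [hx1]
              apply Function.update_eq_self_iff.mpr
              simpa using hni
          have hx1rr : Relation.ReflTransGen (asyncStep (Fsys G)) x x1 := by
            rcases hx1r with h | h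
            · exact h
            · rw [h]
          set y : Fin L ⊕ Fin L → Bool := Function.update x1 (Sum.inr i) true with hy
          have yinl : ∀ k, y (Sum.inl k) = x1 (Sum.inl k) := fun k =>
            Function.update_of_ne (by simp) _ _
          have yinr : ∀ k, k ≠ i → y (Sum.inr k) = x (Sum.inr k) := fun k h => by
            rw [hy, Function.update_of_ne (by simp [h]), x1inr]
          have yi : y (Sum.inr i) = true := Function.update_self _ _ _
          have yili : y (Sum.inl i) = false := by rw [yinl, x1i]
          have hstep2 : asyncStep (Fsys G) x1 y := by
            refine ⟨Sum.inr i, ?_, ?_⟩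
            · simp [Fsys, x1i, x1inr, hdi]
            · rw [hy, x1inr, hdi]; rfl
          refine step y (hx1rr.tail hstep2) (muC ?_ ?_ ?_)
          · apply Finset.card_le_card
            intro k hk
            simp only [f1, Finset.mem_filter, Finset.mem_univ, true_and] at hk ⊢
            have hki : k ≠ i := by
              rintro rfl; rw [yili] at hk; exact absurd hk.1 (by simp)
            rw [yinl, hx1, Function.update_of_ne (by simp [hki])] at hk
            rw [yinr k hki] at hk
            exact hk
          · apply Finset.card_le_card
            intro p hp
            simp only [f2, Finset.mem_filter, Finset.mem_univ, true_and] at hp ⊢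
            obtain ⟨hpadj, h1, h2⟩ := hp
            have hp1 : p.1 ≠ i := by
              rintro h
              rw [h] at hpadj
              have := hnbr p.2 hpadj
              rw [yinr p.2 (fun hh => by rw [hh] at hpadj; exact G.irrefl hpadj)] at h2
              rw [h2] at this; exact absurd this (by simp)
            have hp2 : p.2 ≠ i := by
              rintro h
              rw [h] at hpadj
              have := hnbr p.1 hpadj.symm
              rw [yinr p.1 (fun hh => by rw [hh] at hpadj; exact G.irrefl hpadj)] at h1
              rw [h1] at this; exact absurd this (by simp)
            rw [yinr _ hp1] at h1; rw [yinr _ hp2] at h2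
            exact ⟨hpadj, h1, h2⟩
          · refine Finset.card_lt_card ((Finset.ssubset_iff_of_subset ?_).mpr
              ⟨i, by simp only [f3, Finset.mem_filter, Finset.mem_univ, true_and]; exact ⟨hdi, hnbr⟩, by simp [f3, yi]⟩)
            intro k hk
            simp only [f3, Finset.mem_filter, Finset.mem_univ, true_and] at hk ⊢
            obtain ⟨hk1, hk2⟩ := hk
            have hki : k ≠ i := by rintro rfl; rw [yi] at hk1; exact absurd hk1 (by simp)
            rw [yinr k hki] at hk1
            refine ⟨hk1, fun j haj => ?_⟩
            have := hk2 j haj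
            by_cases hji : j = i
            · rw [hji]; exact hdi
            · rwa [yinr j hji] at this
        · by_cases hD : ∃ i, x (Sum.inl i) = false ∧ ∃ j, G.Adj i j ∧ x (Sum.inr j) = true
          · -- Move D : Notch of i is off but some neighbour has Delta on; switch it on
            obtain ⟨i, hni, j, hadj, hdj⟩ := hD
            have hdi : x (Sum.inr i) = false := by
              by_contra h
              exact hB ⟨i, j, hadj, by simpa using h, hdj⟩
            set y : Fin L ⊕ Fin L → Bool := Function.update x (Sum.inl i) true with hy
            have yinr : ∀ k, y (Sum.inr k) = x (Sum.inr k) := fun k =>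
              Function.update_of_ne (by simp) _ _
            have yinl : ∀ k, k ≠ i → y (Sum.inl k) = x (Sum.inl k) := fun k h =>
              Function.update_of_ne (by simp [h]) _ _
            have yi : y (Sum.inl i) = true := Function.update_self _ _ _
            have hstep1 : asyncStep (Fsys G) x y := by
              refine ⟨Sum.inl i, ?_, by rw [hy, hni]; rfl⟩
              simp only [Fsys, Sum.elim_inl, hni]
              simp only [ne_eq, decide_eq_false_iff_not, not_not]
              exact ⟨j, hadj, hdj⟩
            refine step y (Relation.ReflTransGen.single hstep1) (muD ?_ ?_ ?_ ?_)
            · apply Finset.card_le_card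
              intro k hk
              simp only [f1, Finset.mem_filter, Finset.mem_univ, true_and] at hk ⊢
              have hki : k ≠ i := by
                rintro rfl; rw [yinr, hdi] at hk; exact absurd hk.2 (by simp)
              rw [yinl k hki, yinr] at hk
              exact hk
            · apply Finset.card_le_card
              intro p hp
              simp only [f2, Finset.mem_filter, Finset.mem_univ, true_and] at hp ⊢
              rwa [yinr, yinr] at hp
            · apply Finset.card_le_card
              intro k hk
              simp only [f3, Finset.mem_filter, Finset.mem_univ, true_and] at hk ⊢
              obtain ⟨hk1, hk2⟩ := hk
              rw [yinr] at hk1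
              exact ⟨hk1, fun l hal => by have := hk2 l hal; rwa [yinr] at this⟩
            · refine Finset.card_lt_card ((Finset.ssubset_iff_of_subset ?_).mpr
                ⟨i, by simp [f4, hni, hdi], by simp [f4, yi]⟩)
              intro k hk
              simp only [f4, Finset.mem_filter, Finset.mem_univ, true_and] at hk ⊢
              have hki : k ≠ i := by
                rintro rfl; rw [yi] at hk; exact absurd hk.1 (by simp)
              rw [yinl k hki, yinr] at hk
              exact hk
          · -- no move applies : x is a fixed point
            push_neg at hA hB hC hD
            refine ⟨x, ?_, Relation.ReflTransGen.refl⟩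
            funext k
            rcases k with i | i
            · simp only [Fsys, Sum.elim_inl]
              by_cases hni : x (Sum.inl i) = true
              · rw [hni]
                simp only [decide_eq_true_eq]
                have hdi : x (Sum.inr i) = false := by
                  have := hA i hni
                  simpa using this
                have := hC i hdi
                obtain ⟨j, haj, hj⟩ := this
                exact ⟨j, haj, by simpa using hj⟩
              · have hni' : x (Sum.inl i) = false := by simpa using hni
                rw [hni']
                simp only [decide_eq_false_iff_not, not_exists]
                intro j ⟨haj, hj⟩
                exact absurd hj (by simpa using hD i hni' j haj)
            · simp only [Fsys, Sum.elim_inr]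
              by_cases hni : x (Sum.inl i) = true
              · rw [hni]
                have := hA i hni
                simp only [Bool.not_true]
                simpa using this.symm
              · have hni' : x (Sum.inl i) = false := by simpa using hni
                rw [hni']
                simp only [Bool.not_false]
                by_contra h
                have hdi : x (Sum.inr i) = false := by simpa using (Ne.symm h)
                obtain ⟨j, haj, hj⟩ := hC i hdi
                exact absurd hj (by simpa using hD i hni' j haj)

end DNaux

theorem stmt7 {L : ℕ} (G : SimpleGraph (Fin L)) [DecidableRel G.Adj]
    (hc : G.Connected) (x : Fin L ⊕ Fin L → Bool) (hx : Fsys G x ≠ x) :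
    ∃ y : Fin L ⊕ Fin L → Bool, Fsys G y = y ∧
      Relation.ReflTransGen (asyncStep (Fsys G)) x y := by
  exact DNaux.reach G (DNaux.mu G x + 1) x (by omega)
end

section
/- Every fixed point x ∈ B^L of the reduced Boolean Delta-Notch system N is reachable in the asynchronous dynamics of N both from the all-ones state and from the all-zeros state. -/
theorem stmt8 {L : ℕ} (G : SimpleGraph (Fin L)) [DecidableRel G.Adj]
    (hc : G.Connected) (x : Fin L → Bool) (hx : Nsys G x = x) :
    Relation.ReflTransGen (asyncStep (Nsys G)) (fun _ => true) x ∧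
      Relation.ReflTransGen (asyncStep (Nsys G)) (fun _ => false) x := by
  have hxf : ∀ i, Nsys G x i = x i := fun i => congrFun hx i
  constructor
  · -- from all-ones: flip the coordinates where x is false
    have key : ∀ S : Finset (Fin L), (∀ i ∈ S, x i = false) →
        Relation.ReflTransGen (asyncStep (Nsys G)) (fun _ => true)
          (fun i => if i ∈ S then x i else true) := by
      intro S
      induction S using Finset.induction_on with
      | empty => intro _; exact Relation.ReflTransGen.refl
      | @insert a s ha ih =>
        intro hS
        have hxa : x a = false := hS a (Finset.mem_insert_self a s)
        refine (ih fun i hi => hS i (Finset.mem_insert_of_mem hi)).tail ?_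
        set y : Fin L → Bool := fun i => if i ∈ s then x i else true with hy
        have hya : y a = true := by simp [hy, ha]
        refine ⟨a, ?_, ?_⟩
        · rw [hya]
          simp only [Nsys, ne_eq, decide_eq_true_eq]
          intro h
          rcases h with ⟨j, hadj, hj⟩
          have hjs : j ∈ s := by
            by_contra hjs
            simp [hy, hjs] at hj
          have hxj : x j = false := by simpa [hy, hjs] using hj
          have : Nsys G x a = true := by
            simp only [Nsys, decide_eq_true_eq]
            exact ⟨j, hadj, hxj⟩
          rw [hxf a, hxa] at this
          exact Bool.false_ne_true this
        · funext i
          by_cases hia : i = a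
          · subst hia
            simp [Function.update_self, hya, hxa]
          · simp [Function.update_of_ne hia, hy, Finset.mem_insert, hia]
    have := key (Finset.univ.filter fun i => x i = false)
      (fun i hi => (Finset.mem_filter.mp hi).2)
    convert this using 1
    funext i
    by_cases h : x i = false <;> simp [h]
  · -- from all-zeros: flip the coordinates where x is true
    have key : ∀ S : Finset (Fin L), (∀ i ∈ S, x i = true) →
        Relation.ReflTransGen (asyncStep (Nsys G)) (fun _ => false)
          (fun i => if i ∈ S then x i else false) := by
      intro S
      induction S using Finset.induction_on with
      | empty => intro _; exact Relation.ReflTransGen.refl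
      | @insert a s ha ih =>
        intro hS
        have hxa : x a = true := hS a (Finset.mem_insert_self a s)
        refine (ih fun i hi => hS i (Finset.mem_insert_of_mem hi)).tail ?_
        set y : Fin L → Bool := fun i => if i ∈ s then x i else false with hy
        have hya : y a = false := by simp [hy, ha]
        have hwit : ∃ j, G.Adj a j ∧ x j = false := by
          have : Nsys G x a = true := by rw [hxf a, hxa]
          simpa [Nsys] using this
        refine ⟨a, ?_, ?_⟩
        · rw [hya]
          simp only [Nsys, ne_eq]
          rcases hwit with ⟨j, hadj, hxj⟩
          have hyj : y j = false := by
            by_cases hjs : j ∈ s <;> simp [hy, hjs, hxj]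
          simp only [decide_eq_false_iff_not, not_exists, not_and] at *
          intro h
          exact h j hadj hyj
        · funext i
          by_cases hia : i = a
          · subst hia
            simp [Function.update_self, hya, hxa]
          · simp [Function.update_of_ne hia, hy, Finset.mem_insert, hia]
    have := key (Finset.univ.filter fun i => x i = true)
      (fun i hi => (Finset.mem_filter.mp hi).2)
    convert this using 1
    funext i
    by_cases h : x i = true <;> simp [h]
end

section
/- A subspace x[I] (with x a fixed point of N) is a trap space for the reduced Boolean Delta-Notch system N if and only if for every vertex i in S(I) ∩ I^c there exists a vertex j ∈ S(i) ∩ I^c with x_j = 0, where S(I) = ∪_{i∈I} S(i). -/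
theorem stmt10 {L : ℕ} (G : SimpleGraph (Fin L)) [DecidableRel G.Adj]
    (hc : G.Connected) (x : Fin L → Bool) (hx : Nsys G x = x) (I : Set (Fin L)) :
    isTrapSet (Nsys G) {y | ∀ i ∉ I, y i = x i} ↔
      ∀ i ∉ I, (∃ k ∈ I, G.Adj i k) →
        ∃ j, G.Adj i j ∧ j ∉ I ∧ x j = false := by
  classical
  constructor
  · intro htrap
    -- key: for any y in the subspace and i ∉ I, Nsys G y i = x i
    have key : ∀ y ∈ {y : Fin L → Bool | ∀ i ∉ I, y i = x i}, ∀ i ∉ I,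
        Nsys G y i = x i := by
      intro y hy i hiI
      by_contra hne
      have hyi : y i = x i := hy i hiI
      have hne' : Nsys G y i ≠ y i := by rw [hyi]; exact hne
      have hz := htrap y hy _ ⟨i, hne', rfl⟩
      have := hz i hiI
      rw [Function.update_self, hyi] at this
      exact (Bool.not_ne_self (x i)) this
    intro i hiI ⟨k, hkI, hik⟩
    -- first show x i = true, using y1 = update x k false
    have hy1 : (Function.update x k false) ∈ {y : Fin L → Bool | ∀ i ∉ I, y i = x i} := by
      intro j hjI
      have : j ≠ k := fun h => hjI (h ▸ hkI)
      simp [Function.update_of_ne this]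
    have h1 := key _ hy1 i hiI
    have hxi : x i = true := by
      rw [← h1]
      simp only [Nsys, decide_eq_true_eq]
      exact ⟨k, hik, Function.update_self k false x⟩
    -- now use y2 = all-true on I
    set y2 : Fin L → Bool := fun j => if j ∈ I then true else x j with hy2def
    have hy2 : y2 ∈ {y : Fin L → Bool | ∀ i ∉ I, y i = x i} := by
      intro j hjI; simp [hy2def, hjI]
    have h2 := key _ hy2 i hiI
    rw [hxi] at h2
    simp only [Nsys, decide_eq_true_eq] at h2
    obtain ⟨j, hadj, hj0⟩ := h2
    have hjI : j ∉ I := by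
      intro hj
      simp [hy2def, hj] at hj0
    refine ⟨j, hadj, hjI, ?_⟩
    simpa [hy2def, hjI] using hj0
  · intro h y hy z hs j hjI
    obtain ⟨i, hne, rfl⟩ := hs
    by_cases hji : j = i
    · subst hji
      exfalso
      apply hne
      have hyj : y j = x j := hy j hjI
      rw [hyj]
      by_cases hnb : ∃ k ∈ I, G.Adj j k
      · obtain ⟨j0, hadj, hj0I, hj0⟩ := h j hjI hnb
        have h1 : Nsys G y j = true := by
          simp only [Nsys, decide_eq_true_eq]
          exact ⟨j0, hadj, (hy j0 hj0I).trans hj0⟩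
        have h2 : x j = true := by
          rw [← congrFun hx j]
          simp only [Nsys, decide_eq_true_eq]
          exact ⟨j0, hadj, hj0⟩
        rw [h1, h2]
      · push_neg at hnb
        have : Nsys G y j = Nsys G x j := by
          simp only [Nsys, decide_eq_decide]
          constructor
          · rintro ⟨k, hadj, hk⟩
            exact ⟨k, hadj, (hy k (fun hkI => hnb k hkI hadj)).symm.trans hk⟩
          · rintro ⟨k, hadj, hk⟩
            exact ⟨k, hadj, (hy k (fun hkI => hnb k hkI hadj)).trans hk⟩
        rw [this, congrFun hx j]
    · rw [Function.update_of_ne hji]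
      exact hy j hjI
end

section
/- The subspace x[I] is a trap space for the reduced Boolean Delta-Notch system N if and only if the subspace (x, x̄)[I ∪ (I+L)] is a trap space for the full Boolean Delta-Notch system F, where (x, x̄) denotes the state of B^{2L} whose Notch part is x and Delta part is the negation of x, and I+L = {i+L : i ∈ I}. -/
lemma trap_char {ι : Type*} [DecidableEq ι] (f : (ι → Bool) → (ι → Bool))
    (J : Set ι) (z : ι → Bool) :
    isTrapSet f {y | ∀ j ∉ J, y j = z j} ↔
      ∀ y, (∀ j ∉ J, y j = z j) → ∀ j ∉ J, f y j = y j := by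
  constructor
  · intro h y hy j hj
    by_contra hne
    have hstep : asyncStep f y (Function.update y j (!y j)) := ⟨j, hne, rfl⟩
    have h1 := h y hy _ hstep j hj
    rw [Function.update_self] at h1
    have h2 := hy j hj
    rw [← h2] at h1
    simp at h1
  · rintro h y hy w ⟨i, hfi, rfl⟩ j hj
    rcases eq_or_ne j i with rfl | hne
    · exact absurd (h y hy j hj) hfi
    · rw [Function.update_of_ne hne]; exact hy j hj

theorem stmt11 {L : ℕ} (G : SimpleGraph (Fin L)) [DecidableRel G.Adj]
    (hc : G.Connected) (x : Fin L → Bool) (I : Set (Fin L)) :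
    isTrapSet (Nsys G) {y | ∀ i ∉ I, y i = x i} ↔
      isTrapSet (Fsys G)
        {y | (∀ i ∉ I, y (Sum.inl i) = x i) ∧ (∀ i ∉ I, y (Sum.inr i) = !x i)} := by
  set J : Set (Fin L ⊕ Fin L) := Sum.inl '' I ∪ Sum.inr '' I with hJ
  have hmeml : ∀ i : Fin L, i ∉ I → (Sum.inl i : Fin L ⊕ Fin L) ∉ J := by
    intro i hi
    rintro (⟨k, hk, hke⟩ | ⟨k, hk, hke⟩)
    · obtain rfl := Sum.inl.inj hke; exact hi hk
    · cases hke
  have hmemr : ∀ i : Fin L, i ∉ I → (Sum.inr i : Fin L ⊕ Fin L) ∉ J := by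
    intro i hi
    rintro (⟨k, hk, hke⟩ | ⟨k, hk, hke⟩)
    · cases hke
    · obtain rfl := Sum.inr.inj hke; exact hi hk
  have hsets : {y : Fin L ⊕ Fin L → Bool |
      (∀ i ∉ I, y (Sum.inl i) = x i) ∧ (∀ i ∉ I, y (Sum.inr i) = !x i)} =
      {y | ∀ j ∉ J, y j = Sum.elim x (fun i => !x i) j} := by
    ext y
    simp only [Set.mem_setOf_eq]
    constructor
    · rintro ⟨h1, h2⟩ (j | j) hj
      · exact h1 j (fun hjI => hj (Or.inl ⟨j, hjI, rfl⟩))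
      · exact h2 j (fun hjI => hj (Or.inr ⟨j, hjI, rfl⟩))
    · intro h
      refine ⟨fun i hi => h (Sum.inl i) (hmeml i hi),
        fun i hi => h (Sum.inr i) (hmemr i hi)⟩
  rw [hsets, trap_char, trap_char]
  constructor
  · -- reduced ⇒ full
    intro h y hy j hj
    have hyl : ∀ i ∉ I, y (Sum.inl i) = x i := fun i hi => hy (Sum.inl i) (hmeml i hi)
    have hyr : ∀ i ∉ I, y (Sum.inr i) = !x i := fun i hi => hy (Sum.inr i) (hmemr i hi)
    cases j with
    | inl i =>
      have hiI : i ∉ I := fun hiI => hj (Or.inl ⟨i, hiI, rfl⟩)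
      have hn : ∀ k ∉ I, (fun k => !y (Sum.inr k)) k = x k := by
        intro k hk; show (!(y (Sum.inr k))) = x k; rw [hyr k hk]; simp
      have h2 := h (fun k => !y (Sum.inr k)) hn i hiI
      simp only [Nsys, Bool.not_eq_false'] at h2
      show Fsys G y (Sum.inl i) = y (Sum.inl i)
      simp only [Fsys, Sum.elim_inl]
      rw [h2, hyr i hiI, hyl i hiI]
      simp
    | inr i =>
      have hiI : i ∉ I := fun hiI => hj (Or.inr ⟨i, hiI, rfl⟩)
      show Fsys G y (Sum.inr i) = y (Sum.inr i)
      simp only [Fsys, Sum.elim_inr]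
      rw [hyl i hiI, hyr i hiI]
  · -- full ⇒ reduced
    intro h n hn i hi
    have hyJ : ∀ j ∉ J, (Sum.elim n (fun k => !n k)) j = Sum.elim x (fun i => !x i) j := by
      rintro (j | j) hj
      · exact hn j (fun hjI => hj (Or.inl ⟨j, hjI, rfl⟩))
      · simp only [Sum.elim_inr]
        rw [hn j (fun hjI => hj (Or.inr ⟨j, hjI, rfl⟩))]
    have h2 := h (Sum.elim n (fun k => !n k)) hyJ (Sum.inl i) (hmeml i hi)
    simp only [Fsys, Sum.elim_inl, Sum.elim_inr, Bool.not_eq_true'] at h2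
    simpa only [Nsys] using h2
end

section
/- Let x ∈ B^L, and let I ⊆ {1,...,L} be such that the induced subgraph G_I is connected, x_i = 0 for all i ∈ I, and x_h = 1 for all h ∈ S(I) ∩ I^c. Then no state y ∈ B^L with y_i = 1 for all i ∈ I is reachable from x in the asynchronous dynamics of the reduced Boolean Delta-Notch system N. -/
theorem stmt12 {L : ℕ} (G : SimpleGraph (Fin L)) [DecidableRel G.Adj]
    (hc : G.Connected) (x : Fin L → Bool) (I : Set (Fin L))
    (hconn : (G.induce I).Connected)
    (hx0 : ∀ i ∈ I, x i = false)
    (hx1 : ∀ h ∉ I, (∃ i ∈ I, G.Adj i h) → x h = true)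
    (y : Fin L → Bool) (hy : ∀ i ∈ I, y i = true) :
    ¬ Relation.ReflTransGen (asyncStep (Nsys G)) x y := by
  set A : (Fin L → Bool) → Prop := fun n =>
    (∃ i ∈ I, n i = false) ∧
      ∀ i ∈ I, n i = false → ∀ j, G.Adj i j → j ∉ I → n j = true with hA
  have hxA : A x := by
    obtain ⟨⟨i, hi⟩⟩ := hconn.nonempty
    exact ⟨⟨i, hi, hx0 i hi⟩, fun i hi _ j hadj hj => hx1 j hj ⟨i, hi, hadj⟩⟩
  have step : ∀ n m, A n → asyncStep (Nsys G) n m → A m := by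
    rintro n m ⟨⟨i0, hi0, hni0⟩, hbd⟩ ⟨k, hk, rfl⟩
    by_cases hkI : k ∈ I
    · cases hnk : n k with
      | false =>
        -- k ∈ I flips false → true; so it has a false neighbour, which must be in I
        rw [hnk] at hk
        have hN : Nsys G n k = true := by
          cases h : Nsys G n k
          · exact absurd h hk
          · rfl
        simp only [Nsys, decide_eq_true_eq] at hN
        obtain ⟨j, hadj, hj⟩ := hN
        have hjI : j ∈ I := by
          by_contra hjn
          have := hbd k hkI hnk j hadj hjn
          rw [hj] at this; exact absurd this (by simp)
        have hjk : j ≠ k := fun h => G.irrefl (h ▸ hadj)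
        refine ⟨⟨j, hjI, by simp [Function.update, hjk, hj]⟩, ?_⟩
        intro i hi hmi j' hadj' hj'
        have hik : i ≠ k := by
          intro h; subst h
          simp [Function.update, hnk] at hmi
        have hj'k : j' ≠ k := fun h => hj' (h ▸ hkI)
        simp only [Function.update, dif_neg hik] at hmi
        have := hbd i hi hmi j' hadj' hj'
        simpa [Function.update, hj'k] using this
      | true =>
        -- k ∈ I flips true → false; so all neighbours of k are true
        rw [hnk] at hk
        have hN : Nsys G n k = false := by
          cases h : Nsys G n k
          · rfl
          · exact absurd h hk
        simp only [Nsys, decide_eq_false_iff_not] at hN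
        push_neg at hN
        refine ⟨⟨k, hkI, by simp [Function.update, hnk]⟩, ?_⟩
        intro i hi hmi j' hadj' hj'
        have hj'k : j' ≠ k := fun h => hj' (h ▸ hkI)
        by_cases hik : i = k
        · subst hik
          have := hN j' hadj'
          simp only [ne_eq, Bool.not_eq_false] at this
          simpa [Function.update, hj'k] using this
        · simp only [Function.update, dif_neg hik] at hmi
          have := hbd i hi hmi j' hadj' hj'
          simpa [Function.update, hj'k] using this
    · -- k ∉ I
      have hi0k : i0 ≠ k := fun h => hkI (h ▸ hi0)
      cases hnk : n k with
      | false =>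
        refine ⟨⟨i0, hi0, by simp [Function.update, hi0k, hni0]⟩, ?_⟩
        intro i hi hmi j' hadj' hj'
        have hik : i ≠ k := fun h => hkI (h ▸ hi)
        simp only [Function.update, dif_neg hik] at hmi
        by_cases hj'k : j' = k
        · subst hj'k; simp [Function.update, hnk]
        · have := hbd i hi hmi j' hadj' hj'
          simpa [Function.update, hj'k] using this
      | true =>
        -- k ∉ I flips true → false; all neighbours of k are true, so k is adjacent
        -- to no false node of I
        rw [hnk] at hk
        have hN : Nsys G n k = false := by
          cases h : Nsys G n k
          · rfl
          · exact absurd h hk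
        simp only [Nsys, decide_eq_false_iff_not] at hN
        push_neg at hN
        refine ⟨⟨i0, hi0, by simp [Function.update, hi0k, hni0]⟩, ?_⟩
        intro i hi hmi j' hadj' hj'
        have hik : i ≠ k := fun h => hkI (h ▸ hi)
        simp only [Function.update, dif_neg hik] at hmi
        by_cases hj'k : j' = k
        · subst hj'k
          have := hN i hadj'.symm
          rw [hmi] at this; exact absurd rfl this
        · have := hbd i hi hmi j' hadj' hj'
          simpa [Function.update, hj'k] using this
  intro hreach
  have hyA : ∀ z, Relation.ReflTransGen (asyncStep (Nsys G)) x z → A z := by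
    intro z hz
    induction hz with
    | refl => exact hxA
    | tail _ h ih => exact step _ _ ih h
  obtain ⟨⟨i, hi, hyi⟩, -⟩ := hyA y hreach
  rw [hy i hi] at hyi
  exact absurd hyi (by simp)
end

section
/- Let x ∈ B^L and I ⊆ {1,...,L} be such that the induced subgraph G_I is connected and x_i = 0 for all i ∈ I. Then for every i ∈ I and every J ⊆ I \ {i}, there is a path in the asynchronous dynamics of N from x to the state x̄^J obtained from x by flipping all coordinates in J. -/
/-- In a connected graph, any vertex distinct from `u` has a neighbour
strictly closer to `u`. -/
lemma exists_adj_dist_lt {V : Type*} (H : SimpleGraph V) (hc : H.Connected)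
    (u v : V) (hne : v ≠ u) : ∃ w, H.Adj v w ∧ H.dist u w < H.dist u v := by
  obtain ⟨p, hp⟩ := hc.exists_walk_length_eq_dist u v
  have hpos : 0 < p.length := by
    rcases Nat.eq_zero_or_pos p.length with h0 | h
    · exact absurd (SimpleGraph.Walk.eq_of_length_eq_zero h0) (Ne.symm hne)
    · exact h
  -- reverse walk from v to u has positive length, hence is a cons
  have := p.reverse
  rcases hq : p.reverse with _ | ⟨hadj, q⟩
  · exfalso
    have : p.reverse.length = 0 := by rw [hq]; rfl
    rw [SimpleGraph.Walk.length_reverse] at this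
    omega
  · have hlen : q.length + 1 = p.length := by
      have := congrArg SimpleGraph.Walk.length hq
      rw [SimpleGraph.Walk.length_reverse] at this
      simpa using this.symm
    have hdw := SimpleGraph.dist_le q.reverse
    rw [SimpleGraph.Walk.length_reverse] at hdw
    exact ⟨_, hadj, by omega⟩

theorem stmt13 {L : ℕ} (G : SimpleGraph (Fin L)) [DecidableRel G.Adj]
    (hc : G.Connected) (x : Fin L → Bool) (I : Set (Fin L))
    (hconn : (G.induce I).Connected)
    (hx0 : ∀ i ∈ I, x i = false)
    (i : Fin L) (hi : i ∈ I) (J : Set (Fin L)) (hJ : J ⊆ I \ {i})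
    (y : Fin L → Bool) (hy1 : ∀ j ∈ J, y j = !x j) (hy2 : ∀ j ∉ J, y j = x j) :
    Relation.ReflTransGen (asyncStep (Nsys G)) x y := by
  classical
  set H := G.induce I with hH
  -- distance to i inside the induced graph, extended to all of Fin L
  set D : Fin L → ℕ := fun m =>
    if hm : m ∈ I then H.dist ⟨i, hi⟩ ⟨m, hm⟩ else 0 with hD
  have key : ∀ n (R : Finset (Fin L)), R.card = n → (↑R : Set (Fin L)) ⊆ I \ {i} →
      ∀ z : Fin L → Bool,
        (∀ r ∈ R, z r = false) →
        (∀ m, m ∉ R → z m = y m) →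
        (∀ r ∈ R, y r = true) →
        (∀ m ∈ I, z m = true → ∀ r ∈ R, D r ≤ D m) →
        Relation.ReflTransGen (asyncStep (Nsys G)) z y := by
    intro n
    induction n with
    | zero =>
      intro R hcard _ z _ hz2 _ _
      have hR : R = ∅ := Finset.card_eq_zero.mp hcard
      have : z = y := funext fun m => hz2 m (by simp [hR])
      rw [this]
    | succ n ih =>
      intro R hcard hRsub z hz1 hz2 hyR hinv
      have hne : R.Nonempty := Finset.card_pos.mp (by omega)
      obtain ⟨j, hjR, hjmax⟩ := R.exists_max_image D hne
      have hjI : j ∈ I := (hRsub hjR).1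
      have hjni : j ≠ i := (hRsub hjR).2
      -- find a neighbour of j in I strictly closer to i
      obtain ⟨⟨k, hkI⟩, hadj, hdlt⟩ :=
        exists_adj_dist_lt H hconn ⟨i, hi⟩ ⟨j, hjI⟩ (by simpa using hjni)
      have hGadj : G.Adj j k := by simpa [hH] using hadj
      have hDlt : D k < D j := by simpa [hD, hkI, hjI] using hdlt
      have hzk : z k = false := by
        by_contra h
        have : z k = true := by simpa using h
        exact absurd (hinv k hkI this j hjR) (by omega)
      have hzj : z j = false := hz1 j hjR
      set z' := Function.update z j true with hz'
      have hstep : asyncStep (Nsys G) z z' := by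
        refine ⟨j, ?_, ?_⟩
        · simp only [Nsys, hzj]
          simp only [decide_eq_false_iff_not, ne_eq]
          intro h
          exact h ⟨k, hGadj, hzk⟩
        · simp [hz', hzj]
      have htail : Relation.ReflTransGen (asyncStep (Nsys G)) z' y := by
        refine ih (R.erase j) (by rw [Finset.card_erase_of_mem hjR, hcard]; rfl)
          (fun m hm => hRsub (Finset.mem_coe.mpr (Finset.mem_of_mem_erase hm)))
          z' ?_ ?_ ?_ ?_
        · intro r hr
          have hrj : r ≠ j := Finset.ne_of_mem_erase hr
          rw [hz', Function.update_of_ne hrj]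
          exact hz1 r (Finset.mem_of_mem_erase hr)
        · intro m hm
          by_cases hmj : m = j
          · rw [hmj, hz', Function.update_self]
            exact (hyR j hjR).symm
          · rw [hz', Function.update_of_ne hmj]
            exact hz2 m (fun hmR => hm (Finset.mem_erase.mpr ⟨hmj, hmR⟩))
        · exact fun r hr => hyR r (Finset.mem_of_mem_erase hr)
        · intro m hmI hzm r hr
          have hrR := Finset.mem_of_mem_erase hr
          by_cases hmj : m = j
          · rw [hmj]; exact hjmax r hrR
          · rw [hz', Function.update_of_ne hmj] at hzm
            exact hinv m hmI hzm r hrR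
      exact htail.head hstep
  -- apply key with R = J as a finset, z = x
  have hJfin : J.Finite := Set.toFinite J
  refine key hJfin.toFinset.card hJfin.toFinset rfl ?_ x ?_ ?_ ?_ ?_
  · intro m hm
    exact hJ (by simpa using hm)
  · intro r hr
    exact hx0 r (hJ (hJfin.mem_toFinset.mp hr)).1
  · intro m hm
    exact (hy2 m (fun h => hm (hJfin.mem_toFinset.mpr h))).symm
  · intro r hr
    rw [hy1 r (hJfin.mem_toFinset.mp hr), hx0 r (hJ (hJfin.mem_toFinset.mp hr)).1]
    rfl
  · intro m hmI hxm
    rw [hx0 m hmI] at hxm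
    exact absurd hxm (by simp)
end

section
/- Let x ∈ B^L, and partition {i : x_i = 0} into the maximal subsets I_ν whose induced subgraphs G_{I_ν} are connected (the connected components of the induced subgraph on {i : x_i = 0}). A fixed point y of N is reachable from x in the asynchronous dynamics of N if and only if for each part I_ν there is some i ∈ I_ν with y_i = 0. -/
namespace Stmt14Aux

open Relation Function

variable {L : ℕ} (G : SimpleGraph (Fin L)) [DecidableRel G.Adj]

/-- The subgraph of `G` induced (as a graph on the same vertex set) by `F`. -/
def HF (F : Set (Fin L)) : SimpleGraph (Fin L) where
  Adj a b := G.Adj a b ∧ a ∈ F ∧ b ∈ F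
  symm := ⟨fun a b (h : G.Adj a b ∧ a ∈ F ∧ b ∈ F) => ⟨h.1.symm, h.2.2, h.2.1⟩⟩
  loopless := ⟨fun a (h : G.Adj a a ∧ a ∈ F ∧ a ∈ F) => G.irrefl h.1⟩

variable {G}

lemma nsys_eq_true {z : Fin L → Bool} {u : Fin L} (w : Fin L) (hadj : G.Adj u w)
    (hw : z w = false) : Nsys G z u = true := by
  simp only [Nsys, decide_eq_true_eq]
  exact ⟨w, hadj, hw⟩

lemma nsys_eq_false {z : Fin L → Bool} {u : Fin L} (hall : ∀ w, G.Adj u w → z w = true) :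
    Nsys G z u = false := by
  simp only [Nsys, decide_eq_false_iff_not]
  rintro ⟨w, hadj, hw⟩
  simp [hall w hadj] at hw

lemma step_to_true {z : Fin L → Bool} {u : Fin L} (hu : z u = false) (w : Fin L)
    (hadj : G.Adj u w) (hw : z w = false) :
    asyncStep (Nsys G) z (Function.update z u true) := by
  refine ⟨u, ?_, ?_⟩
  · rw [nsys_eq_true w hadj hw, hu]; simp
  · rw [hu]; rfl

lemma step_to_false {z : Fin L → Bool} {u : Fin L} (hu : z u = true)
    (hall : ∀ w, G.Adj u w → z w = true) :
    asyncStep (Nsys G) z (Function.update z u false) := by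
  refine ⟨u, ?_, ?_⟩
  · rw [nsys_eq_false hall, hu]; simp
  · rw [hu]; rfl

/-- Support of a walk in `HF G F` starting in `F` is contained in `F`. -/
lemma support_mem {F : Set (Fin L)} : ∀ {a b : Fin L} (p : (HF G F).Walk a b),
    a ∈ F → ∀ v ∈ p.support, v ∈ F := by
  intro a b p
  induction p with
  | nil => intro ha v hv; simp at hv; subst hv; exact ha
  | cons h q ih =>
    intro _ v hv
    rw [SimpleGraph.Walk.support_cons, List.mem_cons] at hv
    rcases hv with rfl | hv
    · exact h.2.1
    · exact ih h.2.2 v hv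

lemma mem_of_reachable {F : Set (Fin L)} {a b : Fin L} (h : (HF G F).Reachable a b)
    (ha : a ∈ F) : b ∈ F := by
  obtain ⟨p⟩ := h
  exact support_mem p ha b p.end_mem_support

/-- Transfer a walk from `HF G F` to `HF G F'` provided its support lies in `F'`. -/
lemma reach_transfer {F F' : Set (Fin L)} : ∀ {a b : Fin L} (p : (HF G F).Walk a b),
    (∀ v ∈ p.support, v ∈ F') → (HF G F').Reachable a b := by
  intro a b p
  induction p with
  | nil => intro _; exact SimpleGraph.Reachable.refl _
  | @cons a c b h q ih =>
    intro hsub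
    have ha : a ∈ F' := hsub a (by simp)
    have hc : c ∈ F' := hsub c (by simp)
    have : (HF G F').Adj a c := ⟨h.1, ha, hc⟩
    exact this.reachable.trans (ih fun v hv => hsub v (by simp [hv]))

lemma hf_mono {F F' : Set (Fin L)} (h : F ⊆ F') : HF G F ≤ HF G F' :=
  fun _ _ ⟨ha, h1, h2⟩ => ⟨ha, h h1, h h2⟩

/-- Phase 1: contract the connected false component of `t` down to `{t}`. -/
lemma shrink : ∀ n (z : Fin L → Bool),
    (Finset.univ.filter fun i => z i = false).card ≤ n →
    ∀ t : Fin L, z t = false →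
    ∃ z', Relation.ReflTransGen (asyncStep (Nsys G)) z z' ∧
      z' t = false ∧
      (∀ i, (HF G {v | z v = false}).Reachable t i → i ≠ t → z' i = true) ∧
      (∀ i, ¬ (HF G {v | z v = false}).Reachable t i → z' i = z i) := by
  intro n
  induction n with
  | zero =>
    intro z hcard t ht
    exfalso
    have : t ∈ Finset.univ.filter fun i => z i = false := by simp [ht]
    have := Finset.card_pos.mpr ⟨t, this⟩
    omega
  | succ n ih =>
    intro z hcard t ht
    set F : Set (Fin L) := {v | z v = false} with hF
    by_cases hdeg : ∀ i, (HF G F).Reachable t i → i = t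
    · exact ⟨z, Relation.ReflTransGen.refl, ht,
        fun i hr hne => absurd (hdeg i hr) hne, fun i _ => rfl⟩
    push_neg at hdeg
    obtain ⟨i₀, hri₀, hi₀ne⟩ := hdeg
    -- pick u in the component of t of maximal distance from t
    haveI : DecidablePred fun u => (HF G F).Reachable t u := fun _ => Classical.propDecidable _
    set Cf : Finset (Fin L) := Finset.univ.filter fun u => (HF G F).Reachable t u with hCf
    have hCfne : Cf.Nonempty := ⟨i₀, by simp [hCf, hri₀]⟩
    obtain ⟨u, huC, humax⟩ := Cf.exists_max_image (fun v => (HF G F).dist t v) hCfne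
    have hru : (HF G F).Reachable t u := by simpa [hCf] using huC
    have hi₀C : i₀ ∈ Cf := by simp [hCf, hri₀]
    have hdistpos : 1 ≤ (HF G F).dist t u := by
      have h1 : 1 ≤ (HF G F).dist t i₀ := by
        rcases Nat.eq_zero_or_pos ((HF G F).dist t i₀) with h0 | h
        · exfalso
          rcases (SimpleGraph.dist_eq_zero_iff_eq_or_not_reachable).mp h0 with rfl | hnr
          · exact hi₀ne rfl
          · exact hnr hri₀
        · exact h
      exact le_trans h1 (humax i₀ hi₀C)
    have hunet : u ≠ t := by
      rintro rfl
      simp [SimpleGraph.dist_self] at hdistpos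
    have htF : t ∈ F := ht
    have huF : u ∈ F := mem_of_reachable hru htF
    -- u has a neighbour in F
    obtain ⟨w, hadjuw, hwF⟩ : ∃ w, G.Adj u w ∧ w ∈ F := by
      obtain ⟨p⟩ := hru.symm
      cases p with
      | nil => exact absurd rfl hunet
      | cons h q => exact ⟨_, h.1, h.2.2⟩
    -- flip u to true
    have hstep := step_to_true huF w hadjuw hwF
    set z1 : Fin L → Bool := Function.update z u true with hz1
    have hz1u : z1 u = true := by simp [hz1]
    have hz1other : ∀ i, i ≠ u → z1 i = z i := fun i hi => Function.update_of_ne hi _ _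
    set F1 : Set (Fin L) := {v | z1 v = false} with hF1
    have hF1eq : F1 = F \ {u} := by
      ext v
      by_cases hv : v = u
      · subst hv; simp [hF1, hz1u]
      · simp [hF1, hF, hz1other v hv, hv]
    have hF1sub : F1 ⊆ F := by rw [hF1eq]; exact Set.diff_subset
    -- cardinality decreases
    have hcard1 : (Finset.univ.filter fun i => z1 i = false).card ≤ n := by
      have hsub : (Finset.univ.filter fun i => z1 i = false) ⊆
          (Finset.univ.filter fun i => z i = false).erase u := by
        intro v hv
        simp only [Finset.mem_filter, Finset.mem_univ, true_and] at hv
        have hvu : v ≠ u := by rintro rfl; rw [hz1u] at hv; exact Bool.noConfusion hv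
        rw [Finset.mem_erase]
        exact ⟨hvu, by simp [← hz1other v hvu, hv]⟩
      have := Finset.card_le_card hsub
      have hmem : u ∈ Finset.univ.filter fun i => z i = false := by
        simp only [Finset.mem_filter, Finset.mem_univ, true_and]; exact huF
      have := Finset.card_erase_of_mem hmem
      omega
    have ht1 : z1 t = false := by
      rw [hz1other t (Ne.symm hunet)]; exact ht
    -- reachability away from u is preserved
    have havoid : ∀ i, (HF G F).Reachable t i → i ≠ u → (HF G F1).Reachable t i := by
      intro i hri hiu
      obtain ⟨p, hp⟩ := hri.exists_walk_length_eq_dist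
      have hiC : i ∈ Cf := by simp [hCf, hri]
      have husup : u ∉ p.support := by
        intro hsup
        have hspec := p.take_spec hsup
        have hlen : (p.takeUntil u hsup).length + (p.dropUntil u hsup).length = p.length := by
          have := congrArg SimpleGraph.Walk.length hspec
          rwa [SimpleGraph.Walk.length_append] at this
        have hr1 : 1 ≤ (p.dropUntil u hsup).length := by
          rcases Nat.eq_zero_or_pos (p.dropUntil u hsup).length with h0 | h
          · exact absurd (SimpleGraph.Walk.eq_of_length_eq_zero h0) hiu.symm
          · exact h
        have hd1 : (HF G F).dist t u ≤ (p.takeUntil u hsup).length :=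
          SimpleGraph.dist_le _
        have hd2 : (HF G F).dist t i ≤ (HF G F).dist t u := humax i hiC
        omega
      refine reach_transfer p fun v hv => ?_
      have hvF : v ∈ F := support_mem p htF v hv
      have hvu : v ≠ u := by rintro rfl; exact husup hv
      rw [hF1eq]; exact ⟨hvF, hvu⟩
    obtain ⟨z2, hsteps2, hz2t, hz2comp, hz2out⟩ := ih z1 hcard1 t ht1
    refine ⟨z2, Relation.ReflTransGen.trans
      (Relation.ReflTransGen.single hstep) hsteps2, hz2t, ?_, ?_⟩
    · intro i hri hit
      by_cases hiu : i = u
      · subst hiu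
        have hnr : ¬ (HF G F1).Reachable t i := by
          intro hr
          have := mem_of_reachable hr (show t ∈ F1 from ht1)
          rw [hF1eq] at this
          exact this.2 rfl
        rw [hz2out i hnr]
        exact hz1u
      · exact hz2comp i (havoid i hri hiu) hit
    · intro i hnr
      have hiu : i ≠ u := by rintro rfl; exact hnr hru
      have hnr1 : ¬ (HF G F1).Reachable t i := fun hr =>
        hnr (hr.mono (hf_mono hF1sub))
      rw [hz2out i hnr1]
      exact hz1other i hiu

/-- Phase 2: once all false coordinates are false in `y` too, grow to `y`. -/
lemma grow {y : Fin L → Bool} (hy : Nsys G y = y) : ∀ n (z : Fin L → Bool),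
    (Finset.univ.filter fun i => y i = false ∧ z i = true).card ≤ n →
    (∀ i, z i = false → y i = false) →
    Relation.ReflTransGen (asyncStep (Nsys G)) z y := by
  intro n
  induction n with
  | zero =>
    intro z hcard hsub
    have hempty : ∀ i, ¬ (y i = false ∧ z i = true) := by
      intro i hi
      have : i ∈ Finset.univ.filter fun i => y i = false ∧ z i = true := by simp [hi.1, hi.2]
      have := Finset.card_pos.mpr ⟨i, this⟩
      omega
    have : z = y := by
      funext i
      cases hzi : z i with
      | false => exact (hsub i hzi).symm
      | true =>
        cases hyi : y i with
        | false => exact absurd ⟨hyi, hzi⟩ (hempty i)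
        | true => rfl
    rw [this]
  | succ n ih =>
    intro z hcard hsub
    by_cases hall : ∀ i, ¬ (y i = false ∧ z i = true)
    · have : z = y := by
        funext i
        cases hzi : z i with
        | false => exact (hsub i hzi).symm
        | true =>
          cases hyi : y i with
          | false => exact absurd ⟨hyi, hzi⟩ (hall i)
          | true => rfl
      rw [this]
    push_neg at hall
    obtain ⟨w, hyw, hzw⟩ := hall
    -- all neighbours of w are true in z
    have hnbr : ∀ v, G.Adj w v → z v = true := by
      intro v hadj
      cases hzv : z v with
      | true => rfl
      | false =>
        exfalso
        have hyv := hsub v hzv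
        have : Nsys G y w = true := nsys_eq_true v hadj hyv
        rw [congrFun hy w] at this
        rw [hyw] at this
        exact Bool.noConfusion this
    have hstep := step_to_false hzw hnbr
    set z1 : Fin L → Bool := Function.update z w false with hz1
    have hz1w : z1 w = false := by simp [hz1]
    have hz1other : ∀ i, i ≠ w → z1 i = z i := fun i hi => Function.update_of_ne hi _ _
    have hsub1 : ∀ i, z1 i = false → y i = false := by
      intro i hi
      by_cases hiw : i = w
      · subst hiw; exact hyw
      · exact hsub i (by rw [← hz1other i hiw]; exact hi)
    have hcard1 : (Finset.univ.filter fun i => y i = false ∧ z1 i = true).card ≤ n := by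
      have hsubF : (Finset.univ.filter fun i => y i = false ∧ z1 i = true) ⊆
          (Finset.univ.filter fun i => y i = false ∧ z i = true).erase w := by
        intro v hv
        simp only [Finset.mem_filter, Finset.mem_univ, true_and] at hv
        have hvw : v ≠ w := by
          rintro rfl; rw [hz1w] at hv; exact Bool.noConfusion hv.2
        rw [Finset.mem_erase]
        refine ⟨hvw, by simp [hv.1, ← hz1other v hvw, hv.2]⟩
      have := Finset.card_le_card hsubF
      have hmem : w ∈ Finset.univ.filter fun i => y i = false ∧ z i = true := by
        simp [hyw, hzw]
      have := Finset.card_erase_of_mem hmem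
      omega
    exact Relation.ReflTransGen.trans (Relation.ReflTransGen.single hstep)
      (ih z1 hcard1 hsub1)

/-- The backward direction: the component condition implies reachability of `y`. -/
lemma toFix {y : Fin L → Bool} (hy : Nsys G y = y) : ∀ n (z : Fin L → Bool),
    (Finset.univ.filter fun i => z i = false).card ≤ n →
    (∀ i, z i = false → ∃ j, (HF G {v | z v = false}).Reachable i j ∧ y j = false) →
    Relation.ReflTransGen (asyncStep (Nsys G)) z y := by
  intro n
  induction n with
  | zero =>
    intro z hcard hcomp
    refine grow hy _ z le_rfl ?_
    intro i hi
    exfalso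
    have : i ∈ Finset.univ.filter fun i => z i = false := by simp [hi]
    have := Finset.card_pos.mpr ⟨i, this⟩
    omega
  | succ n ih =>
    intro z hcard hcomp
    set F : Set (Fin L) := {v | z v = false} with hF
    by_cases hdone : ∀ i, z i = false → y i = false
    · exact grow hy _ z le_rfl hdone
    push_neg at hdone
    obtain ⟨i₀, hz0, hy0⟩ := hdone
    obtain ⟨t, hrt, hyt⟩ := hcomp i₀ hz0
    have htF : t ∈ F := mem_of_reachable hrt hz0
    obtain ⟨z', hsteps, hz't, hz'comp, hz'out⟩ :=
      shrink (G := G) ((Finset.univ.filter fun i => z i = false).card) z le_rfl t htF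
    have hi0t : i₀ ≠ t := by
      rintro rfl
      exact hy0 hyt
    have hrti₀ : (HF G F).Reachable t i₀ := hrt.symm
    set F' : Set (Fin L) := {v | z' v = false} with hF'
    -- F' ⊆ F, and i₀ ∉ F'
    have hF'mem : ∀ v, v ∈ F' ↔ (v = t ∨ (v ∈ F ∧ ¬ (HF G F).Reachable t v)) := by
      intro v
      constructor
      · intro hv
        by_cases hvt : v = t
        · exact Or.inl hvt
        · by_cases hvr : (HF G F).Reachable t v
          · exact absurd (hz'comp v hvr hvt) (by simp [hF'] at hv; simp [hv])
          · right
            refine ⟨?_, hvr⟩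
            have := hz'out v hvr
            simp only [hF', Set.mem_setOf_eq] at hv
            rw [this] at hv
            exact hv
      · rintro (rfl | ⟨hvF, hvr⟩)
        · exact hz't
        · show z' v = false
          rw [hz'out v hvr]
          exact hvF
    have hF'F : F' ⊆ F := by
      intro v hv
      rcases (hF'mem v).mp hv with rfl | ⟨h, _⟩
      · exact htF
      · exact h
    have hcard' : (Finset.univ.filter fun i => z' i = false).card ≤ n := by
      have hsubF : (Finset.univ.filter fun i => z' i = false) ⊆
          (Finset.univ.filter fun i => z i = false).erase i₀ := by
        intro v hv
        simp only [Finset.mem_filter, Finset.mem_univ, true_and] at hv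
        have hvF' : v ∈ F' := hv
        have hvi₀ : v ≠ i₀ := by
          rintro rfl
          rcases (hF'mem v).mp hvF' with rfl | ⟨_, hnr⟩
          · exact hi0t rfl
          · exact hnr hrti₀
        rw [Finset.mem_erase]
        refine ⟨hvi₀, ?_⟩
        simp only [Finset.mem_filter, Finset.mem_univ, true_and]
        exact hF'F hvF'
      have := Finset.card_le_card hsubF
      have hmem : i₀ ∈ Finset.univ.filter fun i => z i = false := by simp [hz0]
      have := Finset.card_erase_of_mem hmem
      omega
    have hcomp' : ∀ i, z' i = false →
        ∃ j, (HF G F').Reachable i j ∧ y j = false := by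
      intro i hi
      rcases (hF'mem i).mp hi with rfl | ⟨hiF, hinr⟩
      · exact ⟨i, SimpleGraph.Reachable.refl _, hyt⟩
      · obtain ⟨j, hrj, hyj⟩ := hcomp i hiF
        obtain ⟨p⟩ := hrj
        have hsupp : ∀ v ∈ p.support, v ∈ F' := by
          intro v hv
          have hvF : v ∈ F := support_mem p hiF v hv
          have hvnr : ¬ (HF G F).Reachable t v := by
            intro hrv
            have hiv : (HF G F).Reachable i v := (p.takeUntil v hv).reachable
            exact hinr (hrv.trans hiv.symm)
          exact (hF'mem v).mpr (Or.inr ⟨hvF, hvnr⟩)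
        exact ⟨j, reach_transfer p hsupp, hyj⟩
    exact Relation.ReflTransGen.trans hsteps (ih z' hcard' hcomp')

/-- Convert induced-subgraph reachability to `HF`-reachability. -/
lemma induce_to_hf {F : Set (Fin L)} {a b : F} (h : (G.induce F).Reachable a b) :
    (HF G F).Reachable a.val b.val := by
  obtain ⟨p⟩ := h
  induction p with
  | nil => exact SimpleGraph.Reachable.refl _
  | @cons u c v hadj q ih =>
    have : (HF G F).Adj u.val c.val := ⟨hadj, u.2, c.2⟩
    exact this.reachable.trans ih

/-- Convert `HF`-reachability to induced-subgraph reachability. -/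
lemma hf_to_induce {F : Set (Fin L)} : ∀ {a b : Fin L} (p : (HF G F).Walk a b)
    (ha : a ∈ F) (hb : b ∈ F), (G.induce F).Reachable ⟨a, ha⟩ ⟨b, hb⟩ := by
  intro a b p
  induction p with
  | nil => intro ha hb; exact SimpleGraph.Reachable.refl _
  | @cons u c v hadj q ih =>
    intro ha hb
    have h1 : (G.induce F).Adj ⟨u, ha⟩ ⟨c, hadj.2.2⟩ := hadj.1
    exact h1.reachable.trans (ih hadj.2.2 hb)

/-- The forward direction: a trap-set style invariant. -/
lemma forward {x y : Fin L → Bool}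
    (h : Relation.ReflTransGen (asyncStep (Nsys G)) x y)
    (i : Fin L) (hi : x i = false) :
    ∃ j, (HF G {v | x v = false}).Reachable i j ∧ y j = false := by
  set Fx : Set (Fin L) := {v | x v = false} with hFx
  suffices Q : (∀ a b, G.Adj a b → y a = false → y b = false → x a = false ∧ x b = false) ∧
      ∃ j, (HF G Fx).Reachable i j ∧ y j = false from Q.2
  induction h with
  | refl => exact ⟨fun a b _ ha hb => ⟨ha, hb⟩, ⟨i, SimpleGraph.Reachable.refl _, hi⟩⟩
  | @tail b c hxb hbc ihQ =>
    obtain ⟨k, hk, rfl⟩ := hbc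
    cases hbk : b k with
    | true =>
      -- k flips from true to false: all its neighbours must be true
      have hnk : Nsys G b k = false := by
        cases hnn : Nsys G b k with
        | false => rfl
        | true => rw [hnn, hbk] at hk; exact absurd rfl hk
      have hall : ∀ w, G.Adj k w → b w = true := by
        intro w hadj
        cases hbw : b w with
        | true => rfl
        | false =>
          rw [nsys_eq_true w hadj hbw] at hnk
          exact Bool.noConfusion hnk
      have hupd : ∀ v, v ≠ k → Function.update b k (!true) v = b v :=
        fun v hv => Function.update_of_ne hv _ _
      constructor
      · intro a a' hadj ha ha'
        have hane : a ≠ a' := G.ne_of_adj hadj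
        have hak : a ≠ k := by
          intro heq
          have h1 : a' ≠ k := fun hh => hane (heq.trans hh.symm)
          have h2 : b a' = false := by rw [← hupd a' h1]; exact ha'
          have h3 : G.Adj k a' := heq ▸ hadj
          rw [hall a' h3] at h2
          exact Bool.noConfusion h2
        have ha'k : a' ≠ k := by
          intro heq
          have h2 : b a = false := by rw [← hupd a hak]; exact ha
          have h3 : G.Adj k a := heq ▸ hadj.symm
          rw [hall a h3] at h2
          exact Bool.noConfusion h2
        rw [hupd a hak] at ha
        rw [hupd a' ha'k] at ha'
        exact ihQ.1 a a' hadj ha ha'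
      · obtain ⟨j, hrj, hbj⟩ := ihQ.2
        have hjk : j ≠ k := by
          intro heq; rw [heq, hbk] at hbj; exact Bool.noConfusion hbj
        exact ⟨j, hrj, by rw [hupd j hjk]; exact hbj⟩
    | false =>
      -- k flips from false to true: it has a false neighbour m
      have hnk : Nsys G b k = true := by
        cases hnn : Nsys G b k with
        | true => rfl
        | false => rw [hnn, hbk] at hk; exact absurd rfl hk
      obtain ⟨m, hadjm, hbm⟩ : ∃ m, G.Adj k m ∧ b m = false := by
        simpa only [Nsys, decide_eq_true_eq] using hnk
      have hupd : ∀ v, v ≠ k → Function.update b k (!false) v = b v :=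
        fun v hv => Function.update_of_ne hv _ _
      have hfk : Function.update b k (!false) k = true := by
        rw [Function.update_self]; rfl
      have hQ1 : ∀ a a', G.Adj a a' → Function.update b k (!false) a = false →
          Function.update b k (!false) a' = false → x a = false ∧ x a' = false := by
        intro a a' hadj ha ha'
        have hak : a ≠ k := by
          intro heq; rw [heq, hfk] at ha; exact Bool.noConfusion ha
        have ha'k : a' ≠ k := by
          intro heq; rw [heq, hfk] at ha'; exact Bool.noConfusion ha'
        rw [hupd a hak] at ha
        rw [hupd a' ha'k] at ha'
        exact ihQ.1 a a' hadj ha ha'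
      refine ⟨hQ1, ?_⟩
      obtain ⟨j, hrj, hbj⟩ := ihQ.2
      by_cases hjk : j = k
      · subst hjk
        have hxj : x j = false ∧ x m = false := ihQ.1 j m hadjm hbj hbm
        have hadjF : (HF G Fx).Adj j m := ⟨hadjm, hxj.1, hxj.2⟩
        have hmk : m ≠ j := fun hh => G.loopless.irrefl j (hh ▸ hadjm)
        exact ⟨m, hrj.trans hadjF.reachable, by rw [hupd m hmk]; exact hbm⟩
      · exact ⟨j, hrj, by rw [hupd j hjk]; exact hbj⟩

end Stmt14Aux

theorem stmt14 {L : ℕ} (G : SimpleGraph (Fin L)) [DecidableRel G.Adj]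
    (hc : G.Connected) (x y : Fin L → Bool) (hy : Nsys G y = y) :
    Relation.ReflTransGen (asyncStep (Nsys G)) x y ↔
      ∀ i, ∀ hi : i ∈ {v | x v = false},
        ∃ j, ∃ hj : j ∈ {v | x v = false},
          (G.induce {v | x v = false}).Reachable ⟨i, hi⟩ ⟨j, hj⟩ ∧ y j = false := by
  constructor
  · intro h i hi
    obtain ⟨j, hr, hyj⟩ := Stmt14Aux.forward h i hi
    have hj : x j = false := Stmt14Aux.mem_of_reachable hr hi
    refine ⟨j, hj, ?_, hyj⟩
    obtain ⟨p⟩ := hr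
    exact Stmt14Aux.hf_to_induce p hi hj
  · intro h
    apply Stmt14Aux.toFix hy ((Finset.univ.filter fun i => x i = false).card) x le_rfl
    intro i hi
    obtain ⟨j, hj, hr, hyj⟩ := h i hi
    exact ⟨j, Stmt14Aux.induce_to_hf hr, hyj⟩
end

section
/- For the full Boolean Delta-Notch system F with L ≥ 2 cells, the asynchronous dynamics contains a cycle passing through all four homogeneous states (0,0), (0,1), (1,0), (1,1) (where the first component stands for all Notch levels and the second for all Delta levels being uniformly 0 or 1). More precisely, from (1,0) there is a path to (1,1), from (1,1) to (0,1), from (0,1) to (0,0), and from (0,0) to (1,0). -/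
/-- The homogeneous state with all Notch levels equal to `a` and all Delta levels equal
to `b`. -/
def homog {L : ℕ} (a b : Bool) : Fin L ⊕ Fin L → Bool :=
  Sum.elim (fun _ => a) (fun _ => b)

/-- Chaining asynchronous steps along a sequence of states. -/
lemma asyncChain {ι : Type*} [DecidableEq ι] (f : (ι → Bool) → (ι → Bool))
    (s : ℕ → (ι → Bool)) :
    ∀ n : ℕ, (∀ k, k < n → asyncStep f (s k) (s (k + 1))) →
      Relation.ReflTransGen (asyncStep f) (s 0) (s n)
  | 0, _ => .refl
  | (n + 1), h =>
      .tail (asyncChain f s n (fun k hk => h k (hk.trans (Nat.lt_succ_self _))))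
        (h n (Nat.lt_succ_self _))

section Phases

variable {L : ℕ} (G : SimpleGraph (Fin L)) [DecidableRel G.Adj]

/-- Phase A: lower all Notch levels while Delta is uniformly 0. -/
lemma phaseA :
    Relation.ReflTransGen (asyncStep (Fsys G)) (homog true false) (homog false false) := by
  have h := asyncChain (Fsys G)
    (fun k => Sum.elim (fun i : Fin L => !decide (i.val < k)) (fun _ : Fin L => false)) L ?_
  · have e0 : homog (L := L) true false
        = Sum.elim (fun i : Fin L => !decide (i.val < 0)) (fun _ : Fin L => false) := by
      funext x; cases x <;> simp [homog]
    have eL : homog (L := L) false false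
        = Sum.elim (fun i : Fin L => !decide (i.val < L)) (fun _ : Fin L => false) := by
      funext x; cases x <;> simp [homog, Fin.is_lt]
    rw [e0, eL]; exact h
  · intro k hk
    refine ⟨Sum.inl ⟨k, hk⟩, ?_, ?_⟩
    · simp [Fsys]
    · funext x
      rcases x with i | i
      · by_cases hi : i = ⟨k, hk⟩
        · subst hi; simp [Function.update]
        · have hiv : i.val ≠ k := fun h => hi (Fin.ext h)
          simp only [Function.update, Sum.elim_inl]
          rw [dif_neg (by simpa using hi)]
          simp [Nat.lt_succ_iff_lt_or_eq, hiv]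
          exact ⟨fun h => lt_of_le_of_ne h hiv, Nat.le_of_lt⟩
      · simp [Function.update]

/-- Phase B: raise all Delta levels while Notch is uniformly 0. -/
lemma phaseB :
    Relation.ReflTransGen (asyncStep (Fsys G)) (homog false false) (homog false true) := by
  have h := asyncChain (Fsys G)
    (fun k => Sum.elim (fun _ : Fin L => false) (fun i : Fin L => decide (i.val < k))) L ?_
  · have e0 : homog (L := L) false false
        = Sum.elim (fun _ : Fin L => false) (fun i : Fin L => decide (i.val < 0)) := by
      funext x; cases x <;> simp [homog]
    have eL : homog (L := L) false true
        = Sum.elim (fun _ : Fin L => false) (fun i : Fin L => decide (i.val < L)) := by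
      funext x; cases x <;> simp [homog, Fin.is_lt]
    rw [e0, eL]; exact h
  · intro k hk
    refine ⟨Sum.inr ⟨k, hk⟩, ?_, ?_⟩
    · simp [Fsys]
    · funext x
      rcases x with i | i
      · simp [Function.update]
      · by_cases hi : i = ⟨k, hk⟩
        · subst hi; simp [Function.update]
        · have hiv : i.val ≠ k := fun h => hi (Fin.ext h)
          simp only [Function.update, Sum.elim_inr]
          rw [dif_neg (by simpa using hi)]
          simp [Nat.lt_succ_iff_lt_or_eq, hiv]
          exact ⟨fun h => lt_of_le_of_ne h hiv, Nat.le_of_lt⟩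

/-- Phase C: raise all Notch levels while Delta is uniformly 1
(needs every cell to have a neighbour). -/
lemma phaseC (hN : ∀ i, ∃ j, G.Adj i j) :
    Relation.ReflTransGen (asyncStep (Fsys G)) (homog false true) (homog true true) := by
  have h := asyncChain (Fsys G)
    (fun k => Sum.elim (fun i : Fin L => decide (i.val < k)) (fun _ : Fin L => true)) L ?_
  · have e0 : homog (L := L) false true
        = Sum.elim (fun i : Fin L => decide (i.val < 0)) (fun _ : Fin L => true) := by
      funext x; cases x <;> simp [homog]
    have eL : homog (L := L) true true
        = Sum.elim (fun i : Fin L => decide (i.val < L)) (fun _ : Fin L => true) := by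
      funext x; cases x <;> simp [homog, Fin.is_lt]
    rw [e0, eL]; exact h
  · intro k hk
    refine ⟨Sum.inl ⟨k, hk⟩, ?_, ?_⟩
    · simpa [Fsys] using hN ⟨k, hk⟩
    · funext x
      rcases x with i | i
      · by_cases hi : i = ⟨k, hk⟩
        · subst hi; simp [Function.update]
        · have hiv : i.val ≠ k := fun h => hi (Fin.ext h)
          simp only [Function.update, Sum.elim_inl]
          rw [dif_neg (by simpa using hi)]
          simp [Nat.lt_succ_iff_lt_or_eq, hiv]
          exact ⟨fun h => lt_of_le_of_ne h hiv, Nat.le_of_lt⟩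
      · simp [Function.update]

/-- Phase D: lower all Delta levels while Notch is uniformly 1. -/
lemma phaseD :
    Relation.ReflTransGen (asyncStep (Fsys G)) (homog true true) (homog true false) := by
  have h := asyncChain (Fsys G)
    (fun k => Sum.elim (fun _ : Fin L => true) (fun i : Fin L => !decide (i.val < k))) L ?_
  · have e0 : homog (L := L) true true
        = Sum.elim (fun _ : Fin L => true) (fun i : Fin L => !decide (i.val < 0)) := by
      funext x; cases x <;> simp [homog]
    have eL : homog (L := L) true false
        = Sum.elim (fun _ : Fin L => true) (fun i : Fin L => !decide (i.val < L)) := by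
      funext x; cases x <;> simp [homog, Fin.is_lt]
    rw [e0, eL]; exact h
  · intro k hk
    refine ⟨Sum.inr ⟨k, hk⟩, ?_, ?_⟩
    · simp [Fsys]
    · funext x
      rcases x with i | i
      · simp [Function.update]
      · by_cases hi : i = ⟨k, hk⟩
        · subst hi; simp [Function.update]
        · have hiv : i.val ≠ k := fun h => hi (Fin.ext h)
          simp only [Function.update, Sum.elim_inr]
          rw [dif_neg (by simpa using hi)]
          simp [Nat.lt_succ_iff_lt_or_eq, hiv]
          exact ⟨fun h => lt_of_le_of_ne h hiv, Nat.le_of_lt⟩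

end Phases

theorem stmt15 {L : ℕ} (G : SimpleGraph (Fin L)) [DecidableRel G.Adj]
    (hL : 2 ≤ L) (hc : G.Connected) :
    Relation.ReflTransGen (asyncStep (Fsys G)) (homog true false) (homog true true) ∧
    Relation.ReflTransGen (asyncStep (Fsys G)) (homog true true) (homog false true) ∧
    Relation.ReflTransGen (asyncStep (Fsys G)) (homog false true) (homog false false) ∧
    Relation.ReflTransGen (asyncStep (Fsys G)) (homog false false) (homog true false) := by
  have hN : ∀ i : Fin L, ∃ j, G.Adj i j := by
    intro i
    haveI : Nontrivial (Fin L) := Fin.nontrivial_iff_two_le.mpr hL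
    obtain ⟨j, hj⟩ := exists_ne i
    obtain ⟨w⟩ := hc.preconnected i j
    cases w with
    | nil => exact absurd rfl hj
    | cons h _ => exact ⟨_, h⟩
  have hA := phaseA G
  have hB := phaseB G
  have hC := phaseC G hN
  have hD := phaseD G
  exact ⟨(hA.trans hB).trans hC, hD.trans (hA.trans hB), (hC.trans hD).trans hA,
    hB.trans (hC.trans hD)⟩
end

section
/- Every fixed point x ∈ B^{2L} of the full Boolean Delta-Notch system F is reachable in the asynchronous dynamics of F from every state whose Notch part is homogeneous or whose Delta part is homogeneous, i.e., from every state (n,d) with n = 0, n = 1, d = 0 or d = 1 (constant vectors). -/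
private lemma reach_aux {ι : Type*} [DecidableEq ι] [Fintype ι]
    (f : (ι → Bool) → (ι → Bool)) (y z : ι → Bool)
    (H : ∀ w : ι → Bool, (∀ i, w i = y i ∨ w i = z i) →
      ∀ i, w i ≠ z i → f w i = z i) :
    Relation.ReflTransGen (asyncStep f) y z := by
  classical
  generalize hN : (Finset.univ.filter (fun i => y i ≠ z i)).card = N
  induction N generalizing y with
  | zero =>
    have hyz : y = z := by
      funext i
      by_contra h
      have hmem : i ∈ Finset.univ.filter (fun i => y i ≠ z i) := by simp [h]
      rw [Finset.card_eq_zero] at hN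
      simp [hN] at hmem
    rw [hyz]
  | succ N ih =>
    have hne : (Finset.univ.filter (fun i => y i ≠ z i)).Nonempty := by
      rw [← Finset.card_pos, hN]; omega
    obtain ⟨i, hi⟩ := hne
    simp only [Finset.mem_filter, Finset.mem_univ, true_and] at hi
    have hf : f y i = z i := H y (fun j => Or.inl rfl) i hi
    have hstep : asyncStep f y (Function.update y i (!y i)) :=
      ⟨i, by rw [hf]; exact fun h => hi h.symm, rfl⟩
    set y' := Function.update y i (!y i) with hy'
    have hy'i : y' i = z i := by
      simp only [hy', Function.update_self]
      cases hb : y i <;> cases hb' : z i <;> simp_all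
    have hy'j : ∀ j, j ≠ i → y' j = y j := fun j hj => Function.update_of_ne hj _ _
    have Hcard : (Finset.univ.filter (fun j => y' j ≠ z j)).card = N := by
      have hset : Finset.univ.filter (fun j => y' j ≠ z j)
          = (Finset.univ.filter (fun j => y j ≠ z j)).erase i := by
        ext j
        simp only [Finset.mem_filter, Finset.mem_univ, true_and, Finset.mem_erase]
        constructor
        · intro h
          have hji : j ≠ i := by
            intro hji; subst hji; exact h hy'i
          exact ⟨hji, by rw [← hy'j j hji]; exact h⟩
        · intro ⟨hji, h⟩
          rw [hy'j j hji]; exact h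
      rw [hset, Finset.card_erase_of_mem (by simp [hi]), hN]
      omega
    have H' : ∀ w, (∀ j, w j = y' j ∨ w j = z j) → ∀ j, w j ≠ z j → f w j = z j := by
      intro w hw
      apply H w
      intro j
      rcases hw j with h | h
      · by_cases hj : j = i
        · subst hj; right; rw [h, hy'i]
        · left; rw [h, hy'j j hj]
      · right; exact h
    exact Relation.ReflTransGen.head hstep (ih y' H' Hcard)

/-- A phase updating only Notch coordinates. -/
private lemma phaseN {L : ℕ} (G : SimpleGraph (Fin L)) [DecidableRel G.Adj]
    (y z : Fin L ⊕ Fin L → Bool)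
    (hd : ∀ i, y (Sum.inr i) = z (Sum.inr i))
    (hn : ∀ i, y (Sum.inl i) ≠ z (Sum.inl i) →
      z (Sum.inl i) = decide (∃ j, G.Adj i j ∧ y (Sum.inr j) = true)) :
    Relation.ReflTransGen (asyncStep (Fsys G)) y z := by
  apply reach_aux
  intro w hw i hwi
  cases i with
  | inl i =>
    have hyi : y (Sum.inl i) ≠ z (Sum.inl i) := by
      rcases hw (Sum.inl i) with h | h
      · rw [← h]; exact hwi
      · exact absurd h hwi
    have hwd : ∀ j, w (Sum.inr j) = y (Sum.inr j) := by
      intro j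
      rcases hw (Sum.inr j) with h | h
      · exact h
      · rw [h, hd j]
    simp only [Fsys, Sum.elim_inl]
    rw [hn i hyi]
    simp only [hwd]
  | inr i =>
    exfalso
    rcases hw (Sum.inr i) with h | h
    · exact hwi (h.trans (hd i))
    · exact hwi h

/-- A phase updating only Delta coordinates. -/
private lemma phaseD_s16 {L : ℕ} (G : SimpleGraph (Fin L)) [DecidableRel G.Adj]
    (y z : Fin L ⊕ Fin L → Bool)
    (hn : ∀ i, y (Sum.inl i) = z (Sum.inl i))
    (hd : ∀ i, y (Sum.inr i) ≠ z (Sum.inr i) → z (Sum.inr i) = !y (Sum.inl i)) :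
    Relation.ReflTransGen (asyncStep (Fsys G)) y z := by
  apply reach_aux
  intro w hw i hwi
  cases i with
  | inr i =>
    have hyi : y (Sum.inr i) ≠ z (Sum.inr i) := by
      rcases hw (Sum.inr i) with h | h
      · rw [← h]; exact hwi
      · exact absurd h hwi
    have hwn : w (Sum.inl i) = y (Sum.inl i) := by
      rcases hw (Sum.inl i) with h | h
      · exact h
      · rw [h, hn i]
    simp only [Fsys, Sum.elim_inr]
    rw [hwn, ← hd i hyi]
  | inl i =>
    exfalso
    rcases hw (Sum.inl i) with h | h
    · exact hwi (h.trans (hn i))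
    · exact hwi h

private lemma key_s16 {L : ℕ} (G : SimpleGraph (Fin L)) [DecidableRel G.Adj]
    (x : Fin L ⊕ Fin L → Bool) (hx : Fsys G x = x)
    (n : Fin L → Bool) (c : Bool) :
    Relation.ReflTransGen (asyncStep (Fsys G)) (Sum.elim n (fun _ => c)) x := by
  have hx1 : ∀ i, x (Sum.inl i) = decide (∃ j, G.Adj i j ∧ x (Sum.inr j) = true) :=
    fun i => (congrFun hx (Sum.inl i)).symm
  have hx2 : ∀ i, x (Sum.inr i) = !x (Sum.inl i) :=
    fun i => (congrFun hx (Sum.inr i)).symm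
  cases c with
  | false =>
    refine Relation.ReflTransGen.trans
      (b := Sum.elim (fun _ => false) (fun _ => false)) ?_ ?_
    · apply phaseN G
      · intro i; rfl
      · intro i _; simp
    · refine Relation.ReflTransGen.trans
        (b := Sum.elim (fun _ => false) (fun i => x (Sum.inr i))) ?_ ?_
      · apply phaseD_s16 G
        · intro i; rfl
        · intro i hi
          simp only [Sum.elim_inr, Sum.elim_inl] at *
          cases h : x (Sum.inr i) with
          | false => exact absurd h.symm hi
          | true => rfl
      · apply phaseN G
        · intro i; rfl
        · intro i _
          simp only [Sum.elim_inr]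
          exact hx1 i
  | true =>
    refine Relation.ReflTransGen.trans
      (b := Sum.elim (fun i => decide (∃ j, G.Adj i j)) (fun _ => true)) ?_ ?_
    · apply phaseN G
      · intro i; rfl
      · intro i _; simp
    · refine Relation.ReflTransGen.trans
        (b := Sum.elim (fun i => decide (∃ j, G.Adj i j)) (fun i => x (Sum.inr i))) ?_ ?_
      · apply phaseD_s16 G
        · intro i; rfl
        · intro i hi
          simp only [Sum.elim_inr, Sum.elim_inl] at *
          have hxf : x (Sum.inr i) = false := by
            cases h : x (Sum.inr i) with
            | true => exact absurd h.symm hi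
            | false => rfl
          have hxn : x (Sum.inl i) = true := by
            have := hx2 i
            rw [hxf] at this
            cases h : x (Sum.inl i) <;> simp [h] at this ⊢
          have hex : ∃ j, G.Adj i j ∧ x (Sum.inr j) = true := by
            have := hx1 i
            rw [hxn] at this
            exact of_decide_eq_true this.symm
          obtain ⟨j, hj, _⟩ := hex
          rw [hxf, decide_eq_true (⟨j, hj⟩ : ∃ j, G.Adj i j), Bool.not_true]
      · apply phaseN G
        · intro i; rfl
        · intro i _
          simp only [Sum.elim_inr]
          exact hx1 i

theorem stmt16 {L : ℕ} (G : SimpleGraph (Fin L)) [DecidableRel G.Adj]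
    (hc : G.Connected) (x : Fin L ⊕ Fin L → Bool) (hx : Fsys G x = x)
    (n d : Fin L → Bool)
    (hhom : (∃ a, ∀ i, n i = a) ∨ (∃ a, ∀ i, d i = a)) :
    Relation.ReflTransGen (asyncStep (Fsys G)) (Sum.elim n d) x := by
  rcases hhom with ⟨a, ha⟩ | ⟨a, ha⟩
  · refine Relation.ReflTransGen.trans (b := Sum.elim n (fun _ => !a)) ?_ (key_s16 G x hx n (!a))
    apply phaseD_s16 G
    · intro i; rfl
    · intro i _
      simp only [Sum.elim_inr, Sum.elim_inl]
      rw [ha i]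
  · have hd : d = fun _ => a := funext ha
    rw [hd]
    exact key_s16 G x hx n a
end

section
/- If x ∈ B^{2L} is a state of the full Boolean Delta-Notch system F whose minimal trap space is the whole state space B^{2L}, then there exists a path in the asynchronous dynamics of F from x to the state (1,0) with all Notch levels equal to 1 and all Delta levels equal to 0. -/
section DeltaNotchAux

variable {L : ℕ} (G : SimpleGraph (Fin L)) [DecidableRel G.Adj]

/-- The state space of the Delta-Notch system. -/
abbrev DNSt (L : ℕ) := Fin L ⊕ Fin L → Bool

/-- The homogeneous target state: all Notch `true`, all Delta `false`. -/
def tgt (L : ℕ) : DNSt L := Sum.elim (fun _ => true) (fun _ => false)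

/-- Flip one coordinate of a state. -/
def flp (y : DNSt L) (c : Fin L ⊕ Fin L) : DNSt L := Function.update y c (!(y c))

lemma flp_at (y : DNSt L) (c : Fin L ⊕ Fin L) : flp y c c = !(y c) :=
  Function.update_self _ _ _

lemma flp_ne (y : DNSt L) {c c' : Fin L ⊕ Fin L} (h : c' ≠ c) : flp y c c' = y c' :=
  Function.update_of_ne h _ _

/-- A "closed" set of cells: each cell of `A` has Notch 0, all its neighbours have
Notch 1 and Delta 0, and each such neighbour has some neighbour in `A` with Delta 1.
Nonempty closed sets correspond to proper trap spaces containing the state. -/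
def closedA (y : DNSt L) (A : Set (Fin L)) : Prop :=
  ∀ i ∈ A, y (.inl i) = false ∧ ∀ j, G.Adj i j →
    (y (.inl j) = true ∧ y (.inr j) = false ∧ ∃ k, G.Adj j k ∧ k ∈ A ∧ y (.inr k) = true)

/-- No nonempty closed set exists. -/
def goodP (y : DNSt L) : Prop := ∀ A : Set (Fin L), A.Nonempty → ¬ closedA G y A

lemma closedA_of_agree {y y' : DNSt L} {A : Set (Fin L)}
    (hagree : ∀ v : Fin L, (v ∈ A ∨ ∃ a ∈ A, G.Adj a v) →
      (y' (.inl v) = y (.inl v) ∧ y' (.inr v) = y (.inr v)))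
    (h : closedA G y' A) : closedA G y A := by
  intro i hi
  obtain ⟨h1, h2⟩ := h i hi
  refine ⟨((hagree i (Or.inl hi)).1).symm.trans h1, ?_⟩
  intro j hj
  obtain ⟨g1, g2, k, hjk, hkA, hk⟩ := h2 j hj
  have aj := hagree j (Or.inr ⟨i, hi, hj⟩)
  exact ⟨aj.1.symm.trans g1, aj.2.symm.trans g2, k, hjk, hkA,
    (hagree k (Or.inl hkA)).2.symm.trans hk⟩

/-- Move F1: charge the Delta of a cell with Notch 0, provided some neighbour either
has Notch 0 or already has Delta 1. -/
lemma stepF1 (y : DNSt L) (v w : Fin L) (hn : y (.inl v) = false) (hd : y (.inr v) = false)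
    (hvw : G.Adj v w) (hw : y (.inl w) = false ∨ y (.inr w) = true)
    (hP : goodP G y) :
    asyncStep (Fsys G) y (flp y (.inr v)) ∧ goodP G (flp y (.inr v)) := by
  refine ⟨⟨.inr v, by simp [Fsys, hn, hd], rfl⟩, ?_⟩
  intro A hA hcl
  by_cases hvA : v ∈ A
  · obtain ⟨-, h2⟩ := hcl v hvA
    obtain ⟨g1, g2, -⟩ := h2 w hvw
    rw [flp_ne y (by simp : (Sum.inl w : Fin L ⊕ Fin L) ≠ .inr v)] at g1
    rw [flp_ne y (by simp [hvw.ne'] : (Sum.inr w : Fin L ⊕ Fin L) ≠ .inr v)] at g2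
    rcases hw with h | h
    · rw [g1] at h; simp at h
    · rw [g2] at h; simp at h
  · by_cases hnb : ∃ a ∈ A, G.Adj a v
    · obtain ⟨a, haA, hav⟩ := hnb
      obtain ⟨-, h2⟩ := hcl a haA
      obtain ⟨-, g2, -⟩ := h2 v hav
      rw [flp_at, hd] at g2
      simp at g2
    · refine hP A hA (closedA_of_agree G ?_ hcl)
      intro u hu
      have huv : u ≠ v := by
        rintro rfl
        rcases hu with h | h
        · exact hvA h
        · exact hnb h
      exact ⟨flp_ne y (by simp), flp_ne y (by simp [huv])⟩

/-- Move F2: raise the Notch of a cell whose Delta is already 1, using a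
neighbour with Delta 1. -/
lemma stepF2 (y : DNSt L) (v w : Fin L) (hn : y (.inl v) = false) (hd : y (.inr v) = true)
    (hvw : G.Adj v w) (hw : y (.inr w) = true)
    (hP : goodP G y) :
    asyncStep (Fsys G) y (flp y (.inl v)) ∧ goodP G (flp y (.inl v)) := by
  have hex : (∃ j, G.Adj v j ∧ y (.inr j) = true) := ⟨w, hvw, hw⟩
  refine ⟨⟨.inl v, by simp [Fsys, hn, hex], rfl⟩, ?_⟩
  intro A hA hcl
  by_cases hvA : v ∈ A
  · have g1 := (hcl v hvA).1
    rw [flp_at, hn] at g1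
    simp at g1
  · by_cases hnb : ∃ a ∈ A, G.Adj a v
    · obtain ⟨a, haA, hav⟩ := hnb
      obtain ⟨-, g2, -⟩ := (hcl a haA).2 v hav
      rw [flp_ne y (by simp : (Sum.inr v : Fin L ⊕ Fin L) ≠ .inl v), hd] at g2
      simp at g2
    · refine hP A hA (closedA_of_agree G ?_ hcl)
      intro u hu
      have huv : u ≠ v := by
        rintro rfl
        rcases hu with h | h
        · exact hvA h
        · exact hnb h
      exact ⟨flp_ne y (by simp [huv]), flp_ne y (by simp)⟩

/-- Move F3: lower the Delta of a cell with Notch 1, provided all its neighbours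
have Notch 1. -/
lemma stepF3 (y : DNSt L) (v : Fin L) (hn : y (.inl v) = true) (hd : y (.inr v) = true)
    (hnb : ∀ w, G.Adj v w → y (.inl w) = true)
    (hP : goodP G y) :
    asyncStep (Fsys G) y (flp y (.inr v)) ∧ goodP G (flp y (.inr v)) := by
  refine ⟨⟨.inr v, by simp [Fsys, hn, hd], rfl⟩, ?_⟩
  intro A hA hcl
  by_cases hvA : v ∈ A
  · have g1 := (hcl v hvA).1
    rw [flp_ne y (by simp : (Sum.inl v : Fin L ⊕ Fin L) ≠ .inr v), hn] at g1
    simp at g1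
  · by_cases hnb' : ∃ a ∈ A, G.Adj a v
    · obtain ⟨a, haA, hav⟩ := hnb'
      have g1 := (hcl a haA).1
      rw [flp_ne y (by simp : (Sum.inl a : Fin L ⊕ Fin L) ≠ .inr v), hnb a hav.symm] at g1
      simp at g1
    · refine hP A hA (closedA_of_agree G ?_ hcl)
      intro u hu
      have huv : u ≠ v := by
        rintro rfl
        rcases hu with h | h
        · exact hvA h
        · exact hnb' h
      exact ⟨flp_ne y (by simp), flp_ne y (by simp [huv])⟩

/-- Move F4: lower the Notch of a cell all of whose neighbours have Delta 0,
provided some neighbour has Notch 0. -/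
lemma stepF4 (y : DNSt L) (v : Fin L) (hn : y (.inl v) = true)
    (hnb : ∀ w, G.Adj v w → y (.inr w) = false)
    (w₀ : Fin L) (hvw₀ : G.Adj v w₀) (hw₀ : y (.inl w₀) = false)
    (hP : goodP G y) :
    asyncStep (Fsys G) y (flp y (.inl v)) ∧ goodP G (flp y (.inl v)) := by
  have hnone : ¬ ∃ j, G.Adj v j ∧ y (.inr j) = true := by
    rintro ⟨j, hj, hjt⟩
    rw [hnb j hj] at hjt
    simp at hjt
  refine ⟨⟨.inl v, by simp [Fsys, hn, hnone], rfl⟩, ?_⟩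
  intro A hA hcl
  by_cases hvA : v ∈ A
  · obtain ⟨g1, -, -⟩ := (hcl v hvA).2 w₀ hvw₀
    rw [flp_ne y (by simp [hvw₀.ne'] : (Sum.inl w₀ : Fin L ⊕ Fin L) ≠ .inl v), hw₀] at g1
    simp at g1
  · by_cases hnb' : ∃ a ∈ A, G.Adj a v
    · obtain ⟨a, haA, hav⟩ := hnb'
      obtain ⟨g1, -, -⟩ := (hcl a haA).2 v hav
      rw [flp_at, hn] at g1
      simp at g1
    · refine hP A hA (closedA_of_agree G ?_ hcl)
      intro u hu
      have huv : u ≠ v := by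
        rintro rfl
        rcases hu with h | h
        · exact hvA h
        · exact hnb' h
      exact ⟨flp_ne y (by simp [huv]), flp_ne y (by simp)⟩

/-- The set of cells with Notch 0. -/
def Zf (y : DNSt L) : Finset (Fin L) := Finset.univ.filter fun i => y (.inl i) = false

lemma Zcard_lt (y y' : DNSt L)
    (hsub : ∀ u, y' (.inl u) = false → y (.inl u) = false)
    (i₀ : Fin L) (h1 : y (.inl i₀) = false) (h2 : y' (.inl i₀) = true) :
    (Zf y').card < (Zf y).card := by
  apply Finset.card_lt_card
  rw [Finset.ssubset_iff_of_subset]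
  · exact ⟨i₀, by simp [Zf, h1], by simp [Zf, h2]⟩
  · intro u hu
    simp only [Zf, Finset.mem_filter, Finset.mem_univ, true_and] at hu ⊢
    exact hsub u hu

/-- Clear all charged Deltas around a fixed cell `j₀` (they all belong to cells
with Notch 1 whose neighbours all have Notch 1). -/
lemma clearNbrs (j₀ : Fin L) : ∀ (m : ℕ) (y : DNSt L), goodP G y →
    (∀ k, G.Adj j₀ k → y (.inl k) = false → y (.inr k) = false) →
    (∀ i k, y (.inl i) = false → G.Adj i k → y (.inr k) = false) →
    (Finset.univ.filter (fun k => G.Adj j₀ k ∧ y (.inr k) = true)).card ≤ m →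
    ∃ y', Relation.ReflTransGen (asyncStep (Fsys G)) y y' ∧ goodP G y' ∧
      (∀ k, G.Adj j₀ k → y' (.inr k) = false) ∧
      (∀ u, y' (.inl u) = y (.inl u)) ∧
      (∀ k, y (.inr k) = false → y' (.inr k) = false) := by
  intro m
  induction m with
  | zero =>
    intro y hP hK hA hcard
    have hempty := Finset.card_eq_zero.mp (Nat.le_zero.mp hcard)
    have hclr : ∀ k, G.Adj j₀ k → y (.inr k) = false := by
      intro k hk
      cases hb : y (.inr k) with
      | false => rfl
      | true =>
        have : k ∈ Finset.univ.filter (fun k => G.Adj j₀ k ∧ y (.inr k) = true) := by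
          simp [hk, hb]
        rw [hempty] at this
        exact absurd this (Finset.notMem_empty k)
    exact ⟨y, Relation.ReflTransGen.refl, hP, hclr, fun _ => rfl, fun _ h => h⟩
  | succ m IH =>
    intro y hP hK hA hcard
    by_cases hex : ∃ k, G.Adj j₀ k ∧ y (.inr k) = true
    · obtain ⟨k, hjk, hdk⟩ := hex
      have hnk : y (.inl k) = true := by
        cases hb : y (.inl k) with
        | true => rfl
        | false => rw [hK k hjk hb] at hdk; simp at hdk
      have hnbk : ∀ w, G.Adj k w → y (.inl w) = true := by
        intro w hkw
        cases hb : y (.inl w) with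
        | true => rfl
        | false => rw [hA w k hb hkw.symm] at hdk; simp at hdk
      obtain ⟨hstep, hP1⟩ := stepF3 G y k hnk hdk hnbk hP
      set y₁ := flp y (.inr k) with hy₁
      have e₁ : ∀ u, y₁ (.inl u) = y (.inl u) := fun u => flp_ne y (by simp)
      have e₂ : y₁ (.inr k) = false := by rw [hy₁, flp_at, hdk]; rfl
      have e₃ : ∀ u, u ≠ k → y₁ (.inr u) = y (.inr u) := fun u hu =>
        flp_ne y (by simp [hu])
      have hK1 : ∀ k', G.Adj j₀ k' → y₁ (.inl k') = false → y₁ (.inr k') = false := by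
        intro k' h1 h2
        by_cases hk' : k' = k
        · subst hk'; exact e₂
        · rw [e₃ k' hk']
          rw [e₁ k'] at h2
          exact hK k' h1 h2
      have hA1 : ∀ i k', y₁ (.inl i) = false → G.Adj i k' → y₁ (.inr k') = false := by
        intro i k' h1 h2
        by_cases hk' : k' = k
        · subst hk'; exact e₂
        · rw [e₃ k' hk']
          rw [e₁ i] at h1
          exact hA i k' h1 h2
      have hcard1 :
          (Finset.univ.filter (fun k' => G.Adj j₀ k' ∧ y₁ (.inr k') = true)).card ≤ m := by
        have hlt : (Finset.univ.filter (fun k' => G.Adj j₀ k' ∧ y₁ (.inr k') = true)).card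
            < (Finset.univ.filter (fun k' => G.Adj j₀ k' ∧ y (.inr k') = true)).card := by
          apply Finset.card_lt_card
          rw [Finset.ssubset_iff_of_subset]
          · refine ⟨k, by simp [hjk, hdk], by simp [hjk, e₂]⟩
          · intro u hu
            simp only [Finset.mem_filter, Finset.mem_univ, true_and] at hu ⊢
            obtain ⟨hu1, hu2⟩ := hu
            have huk : u ≠ k := by
              rintro rfl
              rw [e₂] at hu2
              simp at hu2
            rw [e₃ u huk] at hu2
            exact ⟨hu1, hu2⟩
        exact Nat.lt_succ_iff.mp (lt_of_lt_of_le hlt hcard)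
      obtain ⟨y', rtg, hP', hc', hinl', hlow'⟩ := IH y₁ hP1 hK1 hA1 hcard1
      refine ⟨y', Relation.ReflTransGen.head hstep rtg, hP', hc',
        fun u => (hinl' u).trans (e₁ u), ?_⟩
      intro u h
      apply hlow'
      by_cases hu : u = k
      · subst hu; exact e₂
      · rw [e₃ u hu]; exact h
    · have hclr : ∀ k, G.Adj j₀ k → y (.inr k) = false := by
        intro k hk
        cases hb : y (.inr k) with
        | false => rfl
        | true => exact absurd ⟨k, hk, hb⟩ hex
      exact ⟨y, Relation.ReflTransGen.refl, hP, hclr, fun _ => rfl, fun _ h => h⟩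

/-- Endgame: once all Notch values are 1, lower all Deltas to reach the target. -/
lemma endgame : ∀ (m : ℕ) (y : DNSt L), (∀ i, y (.inl i) = true) →
    (Finset.univ.filter fun i => y (.inr i) = true).card ≤ m →
    Relation.ReflTransGen (asyncStep (Fsys G)) y (tgt L) := by
  intro m
  induction m with
  | zero =>
    intro y h1 hcard
    have hempty := Finset.card_eq_zero.mp (Nat.le_zero.mp hcard)
    have h2 : ∀ i, y (.inr i) = false := by
      intro i
      cases hb : y (.inr i) with
      | false => rfl
      | true =>
        have : i ∈ Finset.univ.filter (fun i => y (.inr i) = true) := by simp [hb]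
        rw [hempty] at this
        exact absurd this (Finset.notMem_empty i)
    have heq : y = tgt L := funext fun c => by
      cases c with
      | inl i => simpa [tgt] using h1 i
      | inr i => simpa [tgt] using h2 i
    rw [heq]
  | succ m IH =>
    intro y h1 hcard
    by_cases hex : ∃ i, y (.inr i) = true
    · obtain ⟨i, hi⟩ := hex
      have hstep : asyncStep (Fsys G) y (flp y (.inr i)) :=
        ⟨.inr i, by simp [Fsys, h1 i, hi], rfl⟩
      set y₁ := flp y (.inr i) with hy₁
      have h1' : ∀ u, y₁ (.inl u) = true := fun u => by
        rw [hy₁, flp_ne y (by simp)]; exact h1 u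
      have e₂ : y₁ (.inr i) = false := by rw [hy₁, flp_at, hi]; rfl
      have hc : (Finset.univ.filter fun u => y₁ (.inr u) = true).card ≤ m := by
        have hlt : (Finset.univ.filter fun u => y₁ (.inr u) = true).card
            < (Finset.univ.filter fun u => y (.inr u) = true).card := by
          apply Finset.card_lt_card
          rw [Finset.ssubset_iff_of_subset]
          · exact ⟨i, by simp [hi], by simp [e₂]⟩
          · intro u hu
            simp only [Finset.mem_filter, Finset.mem_univ, true_and] at hu ⊢
            have huk : u ≠ i := by
              rintro rfl
              rw [e₂] at hu
              simp at hu
            rwa [hy₁, flp_ne y (by simp [huk])] at hu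
        exact Nat.lt_succ_iff.mp (lt_of_lt_of_le hlt hcard)
      exact Relation.ReflTransGen.head hstep (IH y₁ h1' hc)
    · have h2 : ∀ i, y (.inr i) = false := by
        intro i
        cases hb : y (.inr i) with
        | false => rfl
        | true => exact absurd ⟨i, hb⟩ hex
      have heq : y = tgt L := funext fun c => by
        cases c with
        | inl i => simpa [tgt] using h1 i
        | inr i => simpa [tgt] using h2 i
      rw [heq]

/-- Main loop: as long as the state avoids all proper trap spaces, the number of
Notch-0 cells can be driven to zero, and then the target is reached. -/
lemma mainLoop : ∀ (m : ℕ) (y : DNSt L), goodP G y → (Zf y).card ≤ m →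
    Relation.ReflTransGen (asyncStep (Fsys G)) y (tgt L) := by
  intro m
  induction m with
  | zero =>
    intro y hP hcard
    have hempty := Finset.card_eq_zero.mp (Nat.le_zero.mp hcard)
    have hall : ∀ i, y (.inl i) = true := by
      intro i
      cases hb : y (.inl i) with
      | true => rfl
      | false =>
        have : i ∈ Zf y := by simp [Zf, hb]
        rw [hempty] at this
        exact absurd this (Finset.notMem_empty i)
    exact endgame G _ y hall le_rfl
  | succ m IH =>
    intro y hP hcard
    by_cases hZ : ∃ i, y (.inl i) = false
    swap
    · have hall : ∀ i, y (.inl i) = true := by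
        intro i
        cases hb : y (.inl i) with
        | true => rfl
        | false => exact absurd ⟨i, hb⟩ hZ
      exact endgame G _ y hall le_rfl
    obtain ⟨iZ, hiZ⟩ := hZ
    by_cases hCA : ∃ i w, y (.inl i) = false ∧ G.Adj i w ∧ y (.inr w) = true
    · -- Case A: some Notch-0 cell has a charged neighbour
      obtain ⟨i, w, hni, hiw, hdw⟩ := hCA
      by_cases hdi : y (.inr i) = true
      · obtain ⟨s1, hP1⟩ := stepF2 G y i w hni hdi hiw hdw hP
        set y₁ := flp y (.inl i) with hy₁
        have hsub : ∀ u, y₁ (.inl u) = false → y (.inl u) = false := by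
          intro u hu
          by_cases hui : u = i
          · rw [hui] at hu
            rw [hy₁, flp_at, hni] at hu
            simp at hu
          · rwa [hy₁, flp_ne y (by simp [hui])] at hu
        have h2 : y₁ (.inl i) = true := by rw [hy₁, flp_at, hni]; rfl
        have hlt := Zcard_lt y y₁ hsub i hni h2
        exact Relation.ReflTransGen.head s1
          (IH y₁ hP1 (Nat.lt_succ_iff.mp (lt_of_lt_of_le hlt hcard)))
      · have hdi' : y (.inr i) = false := by
          cases hb : y (.inr i) with
          | false => rfl
          | true => exact absurd hb hdi
        obtain ⟨s1, hP1⟩ := stepF1 G y i w hni hdi' hiw (Or.inr hdw) hP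
        set y₁ := flp y (.inr i) with hy₁
        have e1 : ∀ u, y₁ (.inl u) = y (.inl u) := fun u => flp_ne y (by simp)
        have e2 : y₁ (.inr i) = true := by rw [hy₁, flp_at, hdi']; rfl
        have e3 : y₁ (.inr w) = true := by
          rw [hy₁, flp_ne y (by simp [hiw.ne'] : (Sum.inr w : Fin L ⊕ Fin L) ≠ .inr i)]
          exact hdw
        obtain ⟨s2, hP2⟩ := stepF2 G y₁ i w (by rw [e1]; exact hni) e2 hiw e3 hP1
        set y₂ := flp y₁ (.inl i) with hy₂
        have hsub : ∀ u, y₂ (.inl u) = false → y (.inl u) = false := by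
          intro u hu
          by_cases hui : u = i
          · rw [hui] at hu
            rw [hy₂, flp_at, e1 i, hni] at hu
            simp at hu
          · rw [hy₂, flp_ne y₁ (by simp [hui]), e1 u] at hu
            exact hu
        have h2 : y₂ (.inl i) = true := by rw [hy₂, flp_at, e1 i, hni]; rfl
        have hlt := Zcard_lt y y₂ hsub i hni h2
        exact Relation.ReflTransGen.head s1 (Relation.ReflTransGen.head s2
          (IH y₂ hP2 (Nat.lt_succ_iff.mp (lt_of_lt_of_le hlt hcard))))
    · have hCA' : ∀ i w, y (.inl i) = false → G.Adj i w → y (.inr w) = false := by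
        intro i w h1 h2
        cases hb : y (.inr w) with
        | false => rfl
        | true => exact absurd ⟨i, w, h1, h2, hb⟩ hCA
      by_cases hCB : ∃ i j, G.Adj i j ∧ y (.inl i) = false ∧ y (.inl j) = false
      · -- Case B: two adjacent Notch-0 cells
        obtain ⟨i, j, hij, hni, hnj⟩ := hCB
        have hdi : y (.inr i) = false := hCA' j i hnj hij.symm
        have hdj : y (.inr j) = false := hCA' i j hni hij
        have hij_ne : i ≠ j := hij.ne
        obtain ⟨s1, hP1⟩ := stepF1 G y i j hni hdi hij (Or.inl hnj) hP
        set y₁ := flp y (.inr i) with hy₁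
        have e11 : ∀ u, y₁ (.inl u) = y (.inl u) := fun u => flp_ne y (by simp)
        have e12 : y₁ (.inr i) = true := by rw [hy₁, flp_at, hdi]; rfl
        have e13 : y₁ (.inr j) = false := by
          rw [hy₁, flp_ne y (by simp [hij.ne'] : (Sum.inr j : Fin L ⊕ Fin L) ≠ .inr i)]
          exact hdj
        obtain ⟨s2, hP2⟩ := stepF1 G y₁ j i (by rw [e11]; exact hnj) e13 hij.symm
          (Or.inr e12) hP1
        set y₂ := flp y₁ (.inr j) with hy₂
        have e21 : ∀ u, y₂ (.inl u) = y (.inl u) := fun u =>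
          (flp_ne y₁ (by simp)).trans (e11 u)
        have e22 : y₂ (.inr i) = true := by
          rw [hy₂, flp_ne y₁ (by simp [hij_ne] : (Sum.inr i : Fin L ⊕ Fin L) ≠ .inr j)]
          exact e12
        have e23 : y₂ (.inr j) = true := by rw [hy₂, flp_at, e13]; rfl
        obtain ⟨s3, hP3⟩ := stepF2 G y₂ j i (by rw [e21]; exact hnj) e23 hij.symm e22 hP2
        set y₃ := flp y₂ (.inl j) with hy₃
        have e31 : y₃ (.inl i) = false := by
          rw [hy₃, flp_ne y₂ (by simp [hij_ne] : (Sum.inl i : Fin L ⊕ Fin L) ≠ .inl j),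
            e21]
          exact hni
        have e32 : y₃ (.inr i) = true := by
          rw [hy₃, flp_ne y₂ (by simp)]; exact e22
        have e33 : y₃ (.inr j) = true := by
          rw [hy₃, flp_ne y₂ (by simp)]; exact e23
        obtain ⟨s4, hP4⟩ := stepF2 G y₃ i j e31 e32 hij e33 hP3
        set y₄ := flp y₃ (.inl i) with hy₄
        have hsub : ∀ u, y₄ (.inl u) = false → y (.inl u) = false := by
          intro u hu
          by_cases hui : u = i
          · rw [hui] at hu
            rw [hy₄, flp_at, e31] at hu
            simp at hu
          · rw [hy₄, flp_ne y₃ (by simp [hui])] at hu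
            by_cases huj : u = j
            · rw [huj] at hu
              have hj3 : y₃ (.inl j) = true := by rw [hy₃, flp_at, e21 j, hnj]; rfl
              rw [hj3] at hu
              simp at hu
            · rw [hy₃, flp_ne y₂ (by simp [huj]), e21 u] at hu
              exact hu
        have h4i : y₄ (.inl i) = true := by rw [hy₄, flp_at, e31]; rfl
        have hlt := Zcard_lt y y₄ hsub i hni h4i
        exact Relation.ReflTransGen.head s1 (Relation.ReflTransGen.head s2
          (Relation.ReflTransGen.head s3 (Relation.ReflTransGen.head s4
            (IH y₄ hP4 (Nat.lt_succ_iff.mp (lt_of_lt_of_le hlt hcard))))))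
      · -- Case C
        have hCB' : ∀ i j, G.Adj i j → y (.inl i) = false → y (.inl j) = true := by
          intro i j hadj h1
          cases hb : y (.inl j) with
          | true => rfl
          | false => exact absurd ⟨i, j, hadj, h1, hb⟩ hCB
        rcases Classical.em (∃ i₀ j₀, y (.inl i₀) = false ∧ G.Adj i₀ j₀ ∧
            ∀ k, G.Adj j₀ k → y (.inl k) = false → y (.inr k) = false) with hex | hno
        · obtain ⟨i₀, j₀, hi₀, hij₀, hK⟩ := hex
          have hne₀ : i₀ ≠ j₀ := hij₀.ne
          obtain ⟨y', rtg', hP', hclr, hinl, hlow⟩ := clearNbrs G j₀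
            ((Finset.univ.filter (fun k => G.Adj j₀ k ∧ y (.inr k) = true)).card)
            y hP hK hCA' le_rfl
          have f1 : y' (.inl i₀) = false := by rw [hinl i₀]; exact hi₀
          have f2 : y' (.inl j₀) = true := by rw [hinl j₀]; exact hCB' i₀ j₀ hij₀ hi₀
          have f3 : y' (.inr i₀) = false := hclr i₀ hij₀.symm
          have f4 : y' (.inr j₀) = false := hlow j₀ (hCA' i₀ j₀ hi₀ hij₀)
          obtain ⟨s4, hP4⟩ := stepF4 G y' j₀ f2 hclr i₀ hij₀.symm f1 hP'
          set z₁ := flp y' (.inl j₀) with hz₁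
          have g11 : z₁ (.inl j₀) = false := by rw [hz₁, flp_at, f2]; rfl
          have g12 : z₁ (.inl i₀) = false := by
            rw [hz₁, flp_ne y' (by simp [hne₀] : (Sum.inl i₀ : Fin L ⊕ Fin L) ≠ .inl j₀)]
            exact f1
          have g13 : z₁ (.inr i₀) = false := by
            rw [hz₁, flp_ne y' (by simp)]; exact f3
          have g14 : z₁ (.inr j₀) = false := by
            rw [hz₁, flp_ne y' (by simp)]; exact f4
          obtain ⟨s5, hP5⟩ := stepF1 G z₁ i₀ j₀ g12 g13 hij₀ (Or.inl g11) hP4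
          set z₂ := flp z₁ (.inr i₀) with hz₂
          have g21 : z₂ (.inl j₀) = false := by
            rw [hz₂, flp_ne z₁ (by simp)]; exact g11
          have g22 : z₂ (.inl i₀) = false := by
            rw [hz₂, flp_ne z₁ (by simp)]; exact g12
          have g23 : z₂ (.inr i₀) = true := by rw [hz₂, flp_at, g13]; rfl
          have g24 : z₂ (.inr j₀) = false := by
            rw [hz₂, flp_ne z₁
              (by simp [hij₀.ne'] : (Sum.inr j₀ : Fin L ⊕ Fin L) ≠ .inr i₀)]
            exact g14
          obtain ⟨s6, hP6⟩ := stepF1 G z₂ j₀ i₀ g21 g24 hij₀.symm (Or.inr g23) hP5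
          set z₃ := flp z₂ (.inr j₀) with hz₃
          have g31 : z₃ (.inl j₀) = false := by
            rw [hz₃, flp_ne z₂ (by simp)]; exact g21
          have g32 : z₃ (.inl i₀) = false := by
            rw [hz₃, flp_ne z₂ (by simp)]; exact g22
          have g33 : z₃ (.inr i₀) = true := by
            rw [hz₃, flp_ne z₂ (by simp [hne₀] : (Sum.inr i₀ : Fin L ⊕ Fin L) ≠ .inr j₀)]
            exact g23
          have g34 : z₃ (.inr j₀) = true := by rw [hz₃, flp_at, g24]; rfl
          obtain ⟨s7, hP7⟩ := stepF2 G z₃ j₀ i₀ g31 g34 hij₀.symm g33 hP6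
          set z₄ := flp z₃ (.inl j₀) with hz₄
          have g41 : z₄ (.inl i₀) = false := by
            rw [hz₄, flp_ne z₃ (by simp [hne₀] : (Sum.inl i₀ : Fin L ⊕ Fin L) ≠ .inl j₀)]
            exact g32
          have g42 : z₄ (.inr i₀) = true := by
            rw [hz₄, flp_ne z₃ (by simp)]; exact g33
          have g43 : z₄ (.inr j₀) = true := by
            rw [hz₄, flp_ne z₃ (by simp)]; exact g34
          obtain ⟨s8, hP8⟩ := stepF2 G z₄ i₀ j₀ g41 g42 hij₀ g43 hP7
          set z₅ := flp z₄ (.inl i₀) with hz₅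
          have hsub : ∀ u, z₅ (.inl u) = false → y (.inl u) = false := by
            intro u hu
            by_cases hui : u = i₀
            · rw [hui] at hu
              rw [hz₅, flp_at, g41] at hu
              simp at hu
            · rw [hz₅, flp_ne z₄ (by simp [hui])] at hu
              by_cases huj : u = j₀
              · rw [huj] at hu
                have hj4 : z₄ (.inl j₀) = true := by rw [hz₄, flp_at, g31]; rfl
                rw [hj4] at hu
                simp at hu
              · rw [hz₄, flp_ne z₃ (by simp [huj]), hz₃, flp_ne z₂ (by simp),
                  hz₂, flp_ne z₁ (by simp), hz₁, flp_ne y' (by simp [huj]),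
                  hinl u] at hu
                exact hu
          have h5 : z₅ (.inl i₀) = true := by rw [hz₅, flp_at, g41]; rfl
          have hlt := Zcard_lt y z₅ hsub i₀ hi₀ h5
          exact rtg'.trans (Relation.ReflTransGen.head s4
            (Relation.ReflTransGen.head s5 (Relation.ReflTransGen.head s6
              (Relation.ReflTransGen.head s7 (Relation.ReflTransGen.head s8
                (IH z₅ hP8 (Nat.lt_succ_iff.mp (lt_of_lt_of_le hlt hcard))))))))
        · exfalso
          apply hP {i | y (.inl i) = false} ⟨iZ, hiZ⟩
          push_neg at hno
          intro a ha
          refine ⟨ha, fun j hj => ⟨hCB' a j hj ha, hCA' a j ha hj, ?_⟩⟩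
          obtain ⟨k, hk1, hk2, hk3⟩ := hno a j ha hj
          refine ⟨k, hk1, hk2, ?_⟩
          cases hb : y (.inr k) with
          | true => rfl
          | false => exact absurd hb hk3

end DeltaNotchAux

theorem stmt17 {L : ℕ} (G : SimpleGraph (Fin L)) [DecidableRel G.Adj]
    (hc : G.Connected) (x : Fin L ⊕ Fin L → Bool)
    (hx : ∀ A : Set (Fin L ⊕ Fin L → Bool), isTrapSpace (Fsys G) A → x ∈ A →
      A = Set.univ) :
    Relation.ReflTransGen (asyncStep (Fsys G)) x
      (Sum.elim (fun _ => true) (fun _ => false)) := by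
  classical
  have hPx : goodP G x := by
    intro A hA hcl
    obtain ⟨a₀, ha₀⟩ := hA
    set T : Set (Fin L ⊕ Fin L → Bool) :=
      {z | ∀ i ∈ A, (z (.inl i) = false ∧ (x (.inr i) = true → z (.inr i) = true)) ∧
        ∀ j, G.Adj i j → (z (.inl j) = true ∧ z (.inr j) = false)} with hT
    have hxT : x ∈ T := by
      intro i hi
      obtain ⟨h1, h2⟩ := hcl i hi
      exact ⟨⟨h1, fun h => h⟩, fun j hj => ⟨(h2 j hj).1, (h2 j hj).2.1⟩⟩
    have hsubspace : isSubspace T := by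
      refine ⟨x, {c | ¬ Sum.elim (fun v => v ∈ A ∨ ∃ a ∈ A, G.Adj a v)
        (fun v => (v ∈ A ∧ x (.inr v) = true) ∨ ∃ a ∈ A, G.Adj a v) c}, ?_⟩
      ext z
      simp only [hT, Set.mem_setOf_eq, not_not]
      constructor
      · intro hz c hc'
        cases c with
        | inl v =>
          simp only [Sum.elim_inl] at hc'
          rcases hc' with hv | ⟨a, ha, hav⟩
          · exact ((hz v hv).1.1).trans ((hcl v hv).1).symm
          · exact (((hz a ha).2 v hav).1).trans (((hcl a ha).2 v hav).1).symm
        | inr v =>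
          simp only [Sum.elim_inr] at hc'
          rcases hc' with ⟨hv, hxv⟩ | ⟨a, ha, hav⟩
          · exact ((hz v hv).1.2 hxv).trans hxv.symm
          · exact (((hz a ha).2 v hav).2).trans (((hcl a ha).2 v hav).2.1).symm
      · intro hz i hi
        refine ⟨⟨?_, ?_⟩, ?_⟩
        · exact (hz (.inl i) (Or.inl hi)).trans (hcl i hi).1
        · intro h
          exact (hz (.inr i) (Or.inl ⟨hi, h⟩)).trans h
        · intro j hj
          exact ⟨(hz (.inl j) (Or.inr ⟨i, hi, hj⟩)).trans ((hcl i hi).2 j hj).1,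
            (hz (.inr j) (Or.inr ⟨i, hi, hj⟩)).trans ((hcl i hi).2 j hj).2.1⟩
    have htrap : isTrapSet (Fsys G) T := by
      rintro z hzT y' ⟨c, hFc, rfl⟩
      have key₁ : ∀ i ∈ A, c ≠ .inl i := by
        intro i hi heq
        apply hFc
        subst heq
        have hnone : ¬ ∃ j, G.Adj i j ∧ z (.inr j) = true := by
          rintro ⟨j, hj, hjt⟩
          rw [((hzT i hi).2 j hj).2] at hjt
          simp at hjt
        rw [(hzT i hi).1.1]
        simp [Fsys, hnone]
      have key₂ : ∀ i ∈ A, x (.inr i) = true → c ≠ .inr i := by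
        intro i hi hxi heq
        apply hFc
        subst heq
        rw [(hzT i hi).1.2 hxi]
        simp [Fsys, (hzT i hi).1.1]
      have key₃ : ∀ i ∈ A, ∀ j, G.Adj i j → c ≠ .inl j := by
        intro i hi j hj heq
        apply hFc
        subst heq
        obtain ⟨-, -, k, hjk, hkA, hxk⟩ := (hcl i hi).2 j hj
        have hex : ∃ k, G.Adj j k ∧ z (.inr k) = true := ⟨k, hjk, (hzT k hkA).1.2 hxk⟩
        rw [((hzT i hi).2 j hj).1]
        simp [Fsys, hex]
      have key₄ : ∀ i ∈ A, ∀ j, G.Adj i j → c ≠ .inr j := by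
        intro i hi j hj heq
        apply hFc
        subst heq
        rw [((hzT i hi).2 j hj).2]
        simp [Fsys, ((hzT i hi).2 j hj).1]
      intro i hi
      refine ⟨⟨?_, ?_⟩, ?_⟩
      · rw [Function.update_of_ne (Ne.symm (key₁ i hi))]
        exact (hzT i hi).1.1
      · intro hxi
        rw [Function.update_of_ne (Ne.symm (key₂ i hi hxi))]
        exact (hzT i hi).1.2 hxi
      · intro j hj
        exact ⟨by rw [Function.update_of_ne (Ne.symm (key₃ i hi j hj))]
                  exact ((hzT i hi).2 j hj).1,
               by rw [Function.update_of_ne (Ne.symm (key₄ i hi j hj))]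
                  exact ((hzT i hi).2 j hj).2⟩
    have hTuniv := hx T ⟨hsubspace, htrap⟩ hxT
    have hmem : ((fun _ => true) : Fin L ⊕ Fin L → Bool) ∈ T := by
      rw [hTuniv]; trivial
    exact absurd ((hmem a₀ ha₀).1.1) (by simp)
  exact mainLoop G ((Zf x).card) x hPx le_rfl
end

section
/- For every state y ∈ B^{2L} and every fixed point x of the full Boolean Delta-Notch system F contained in κ(y), the minimal trap space containing y, there exists a path in the asynchronous dynamics of F from y to x. -/
set_option linter.unusedSectionVars false

namespace DNAux

variable {L : ℕ} (G : SimpleGraph (Fin L)) [DecidableRel G.Adj]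

def BP (x z : Fin L ⊕ Fin L → Bool) (k : Fin L) : Prop :=
  x (Sum.inr k) = false ∧ z (Sum.inl k) = false ∧ z (Sum.inr k) = true ∧
    ∀ j, G.Adj k j → z (Sum.inl j) = true ∧ z (Sum.inr j) = false

def cellpot (x z : Fin L ⊕ Fin L → Bool) (i : Fin L) : ℕ :=
  if x (Sum.inr i) = true then
    (if z (Sum.inl i) = x (Sum.inl i) then 0 else 1) +
      (if z (Sum.inr i) = x (Sum.inr i) then 0 else 1)
  else
    if z (Sum.inl i) = true then (if z (Sum.inr i) = true then 1 else 0)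
    else if z (Sum.inr i) = true then 2 else 3

def pot (x z : Fin L ⊕ Fin L → Bool) : ℕ := ∑ i, cellpot x z i

lemma Fsys_inl (z : Fin L ⊕ Fin L → Bool) (i : Fin L) :
    Fsys G z (Sum.inl i) = decide (∃ j, G.Adj i j ∧ z (Sum.inr j) = true) := rfl

lemma Fsys_inr (z : Fin L ⊕ Fin L → Bool) (i : Fin L) :
    Fsys G z (Sum.inr i) = !z (Sum.inl i) := rfl

variable {x : Fin L ⊕ Fin L → Bool}

lemma xnl (hx : Fsys G x = x) (i : Fin L) : x (Sum.inl i) = !x (Sum.inr i) := by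
  have h := congrFun hx (Sum.inr i)
  rw [Fsys_inr] at h
  rw [← h, Bool.not_not]

lemma indep (hx : Fsys G x = x) {i j : Fin L} (hadj : G.Adj i j)
    (hi : x (Sum.inr i) = true) (hj : x (Sum.inr j) = true) : False := by
  have h := congrFun hx (Sum.inl i)
  rw [Fsys_inl, xnl G hx i, hi] at h
  simp only [Bool.not_true, decide_eq_false_iff_not] at h
  exact h ⟨j, hadj, hj⟩

lemma dom (hx : Fsys G x = x) {i : Fin L} (hi : x (Sum.inr i) = false) :
    ∃ j, G.Adj i j ∧ x (Sum.inr j) = true := by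
  have h := congrFun hx (Sum.inl i)
  rw [Fsys_inl, xnl G hx i, hi] at h
  simp only [Bool.not_false, decide_eq_true_eq] at h
  exact h

lemma cellpot_congr {z z' : Fin L ⊕ Fin L → Bool} (j : Fin L)
    (h1 : z' (Sum.inl j) = z (Sum.inl j)) (h2 : z' (Sum.inr j) = z (Sum.inr j)) :
    cellpot x z' j = cellpot x z j := by
  unfold cellpot; rw [h1, h2]

lemma pot_lt_of {z z' : Fin L ⊕ Fin L → Bool} (i : Fin L)
    (hag : ∀ j, j ≠ i → z' (Sum.inl j) = z (Sum.inl j) ∧ z' (Sum.inr j) = z (Sum.inr j))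
    (hlt : cellpot x z' i < cellpot x z i) : pot x z' < pot x z := by
  unfold pot
  apply Finset.sum_lt_sum
  · intro j _
    rcases eq_or_ne j i with rfl | h
    · exact hlt.le
    · exact (cellpot_congr j (hag j h).1 (hag j h).2).le
  · exact ⟨i, Finset.mem_univ _, hlt⟩

lemma BP_of_agree {z z' : Fin L ⊕ Fin L → Bool} {k : Fin L}
    (h1 : z' (Sum.inl k) = z (Sum.inl k)) (h2 : z' (Sum.inr k) = z (Sum.inr k))
    (h3 : ∀ j, G.Adj k j → z' (Sum.inl j) = z (Sum.inl j) ∧ z' (Sum.inr j) = z (Sum.inr j))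
    (h : BP G x z' k) : BP G x z k := by
  obtain ⟨a, b, c, d⟩ := h
  refine ⟨a, ?_, ?_, fun j hj => ⟨?_, ?_⟩⟩
  · rw [← h1]; exact b
  · rw [← h2]; exact c
  · rw [← (h3 j hj).1]; exact (d j hj).1
  · rw [← (h3 j hj).2]; exact (d j hj).2

lemma step_exists (hx : Fsys G x = x) (z : Fin L ⊕ Fin L → Bool)
    (hQ : ∀ k, ¬ BP G x z k) (hzx : z ≠ x) :
    ∃ z', asyncStep (Fsys G) z z' ∧ (∀ k, ¬ BP G x z' k) ∧ pot x z' < pot x z := by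
  classical
  by_cases h1 : ∃ i, x (Sum.inr i) = true ∧ z (Sum.inl i) = false ∧ z (Sum.inr i) = false
  · -- M4 : i ∈ U at (F,F), raise d
    obtain ⟨i, hxi, hn, hd⟩ := h1
    have hxni : x (Sum.inl i) = false := by rw [xnl G hx i, hxi]; rfl
    set z' := Function.update z (Sum.inr i) (!z (Sum.inr i)) with hz'
    have zl : ∀ j, z' (Sum.inl j) = z (Sum.inl j) := fun j =>
      Function.update_of_ne (Sum.inl_ne_inr) _ _
    have zrn : ∀ j, j ≠ i → z' (Sum.inr j) = z (Sum.inr j) := fun j hj =>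
      Function.update_of_ne (fun h => hj (Sum.inr_injective h)) _ _
    have zri : z' (Sum.inr i) = true := by
      rw [hz', Function.update_self, hd]; rfl
    refine ⟨z', ⟨Sum.inr i, by rw [Fsys_inr, hn, hd]; simp, rfl⟩, ?_, ?_⟩
    · intro k hBP
      by_cases hk : k = i
      · subst hk; rw [hBP.1] at hxi; simp at hxi
      by_cases hadj : G.Adj k i
      · have := (hBP.2.2.2 i hadj).2
        rw [zri] at this; simp at this
      · exact hQ k (BP_of_agree G (zl k) (zrn k hk)
          (fun j hj => ⟨zl j, zrn j (fun e => hadj (e ▸ hj))⟩) hBP)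
    · refine pot_lt_of i (fun j hj => ⟨zl j, zrn j hj⟩) ?_
      have e1 : cellpot x z i = 1 := by simp [cellpot, hxi, hxni, hn, hd]
      have e2 : cellpot x z' i = 0 := by
        simp [cellpot, hxi, hxni, (zl i).trans hn, zri]
      rw [e1, e2]; norm_num
  by_cases h2 : ∃ k, x (Sum.inr k) = false ∧ z (Sum.inl k) = false ∧ z (Sum.inr k) = true ∧
      ∃ j, G.Adj k j ∧ z (Sum.inr j) = true
  · -- M1a : k ∈ V at (F,T) with a delta-true neighbour, raise n
    obtain ⟨k, hxk, hn, hd, j0, hadj0, hdj0⟩ := h2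
    have hxnk : x (Sum.inl k) = true := by rw [xnl G hx k, hxk]; rfl
    set z' := Function.update z (Sum.inl k) (!z (Sum.inl k)) with hz'
    have zr : ∀ j, z' (Sum.inr j) = z (Sum.inr j) := fun j =>
      Function.update_of_ne (Sum.inr_ne_inl) _ _
    have zln : ∀ j, j ≠ k → z' (Sum.inl j) = z (Sum.inl j) := fun j hj =>
      Function.update_of_ne (fun h => hj (Sum.inl_injective h)) _ _
    have zlk : z' (Sum.inl k) = true := by rw [hz', Function.update_self, hn]; rfl
    refine ⟨z', ⟨Sum.inl k, ?_, rfl⟩, ?_, ?_⟩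
    · rw [Fsys_inl, hn]
      simp only [ne_eq, decide_eq_false_iff_not, not_not]
      exact ⟨j0, hadj0, hdj0⟩
    · intro k' hBP
      by_cases hk : k' = k
      · subst hk; rw [hBP.2.1] at zlk; simp at zlk
      by_cases hadj : G.Adj k' k
      · have := (hBP.2.2.2 k hadj).2
        rw [zr k, hd] at this; simp at this
      · exact hQ k' (BP_of_agree G (zln k' hk) (zr k')
          (fun j hj => ⟨zln j (fun e => hadj (e ▸ hj)), zr j⟩) hBP)
    · refine pot_lt_of k (fun j hj => ⟨zln j hj, zr j⟩) ?_
      have e1 : cellpot x z k = 2 := by simp [cellpot, hxk, hn, hd]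
      have e2 : cellpot x z' k = 1 := by simp [cellpot, hxk, zlk, (zr k).trans hd]
      rw [e1, e2]; norm_num
  by_cases h3 : ∃ i, x (Sum.inr i) = false ∧ z (Sum.inl i) = true ∧ z (Sum.inr i) = true
  · -- M2 : i ∈ V at (T,T), drop d
    obtain ⟨i, hxi, hn, hd⟩ := h3
    set z' := Function.update z (Sum.inr i) (!z (Sum.inr i)) with hz'
    have zl : ∀ j, z' (Sum.inl j) = z (Sum.inl j) := fun j =>
      Function.update_of_ne (Sum.inl_ne_inr) _ _
    have zrn : ∀ j, j ≠ i → z' (Sum.inr j) = z (Sum.inr j) := fun j hj =>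
      Function.update_of_ne (fun h => hj (Sum.inr_injective h)) _ _
    have zri : z' (Sum.inr i) = false := by rw [hz', Function.update_self, hd]; rfl
    refine ⟨z', ⟨Sum.inr i, by rw [Fsys_inr, hn, hd]; simp, rfl⟩, ?_, ?_⟩
    · intro k hBP
      by_cases hk : k = i
      · subst hk
        have := hBP.2.1
        rw [zl k, hn] at this; simp at this
      by_cases hadj : G.Adj k i
      · refine h2 ⟨k, hBP.1, ?_, ?_, i, hadj, hd⟩
        · rw [← zl k]; exact hBP.2.1
        · rw [← zrn k hk]; exact hBP.2.2.1
      · exact hQ k (BP_of_agree G (zl k) (zrn k hk)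
          (fun j hj => ⟨zl j, zrn j (fun e => hadj (e ▸ hj))⟩) hBP)
    · refine pot_lt_of i (fun j hj => ⟨zl j, zrn j hj⟩) ?_
      have e1 : cellpot x z i = 1 := by simp [cellpot, hxi, hn, hd]
      have e2 : cellpot x z' i = 0 := by simp [cellpot, hxi, (zl i).trans hn, zri]
      rw [e1, e2]; norm_num
  by_cases h4 : ∃ i, x (Sum.inr i) = true ∧ z (Sum.inl i) = true ∧
      ∀ j, G.Adj i j → z (Sum.inr j) = false
  · -- M5/M6 : i ∈ U with n = true and no delta-true neighbour, drop n
    obtain ⟨i, hxi, hn, hall⟩ := h4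
    have hxni : x (Sum.inl i) = false := by rw [xnl G hx i, hxi]; rfl
    set z' := Function.update z (Sum.inl i) (!z (Sum.inl i)) with hz'
    have zr : ∀ j, z' (Sum.inr j) = z (Sum.inr j) := fun j =>
      Function.update_of_ne (Sum.inr_ne_inl) _ _
    have zln : ∀ j, j ≠ i → z' (Sum.inl j) = z (Sum.inl j) := fun j hj =>
      Function.update_of_ne (fun h => hj (Sum.inl_injective h)) _ _
    have zli : z' (Sum.inl i) = false := by rw [hz', Function.update_self, hn]; rfl
    refine ⟨z', ⟨Sum.inl i, ?_, rfl⟩, ?_, ?_⟩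
    · rw [Fsys_inl, hn]
      simp only [ne_eq, decide_eq_true_eq]
      rintro ⟨j, hj, hdj⟩
      rw [hall j hj] at hdj; simp at hdj
    · intro k hBP
      by_cases hk : k = i
      · subst hk; rw [hBP.1] at hxi; simp at hxi
      by_cases hadj : G.Adj k i
      · have := (hBP.2.2.2 i hadj).1
        rw [zli] at this; simp at this
      · exact hQ k (BP_of_agree G (zln k hk) (zr k)
          (fun j hj => ⟨zln j (fun e => hadj (e ▸ hj)), zr j⟩) hBP)
    · refine pot_lt_of i (fun j hj => ⟨zln j hj, zr j⟩) ?_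
      cases hzd : z (Sum.inr i) <;>
        simp [cellpot, hxi, hxni, hn, zli, (zr i).trans hzd, hzd]
  by_cases h5 : ∃ m, x (Sum.inr m) = false ∧ z (Sum.inl m) = false ∧ z (Sum.inr m) = false ∧
      ∃ j, G.Adj m j ∧ ¬(z (Sum.inl j) = true ∧ z (Sum.inr j) = false)
  · -- M3 : m ∈ V at (F,F) with a neighbour not at (T,F), raise d
    obtain ⟨m, hxm, hn, hd, j0, hadj0, hne0⟩ := h5
    set z' := Function.update z (Sum.inr m) (!z (Sum.inr m)) with hz'
    have zl : ∀ j, z' (Sum.inl j) = z (Sum.inl j) := fun j =>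
      Function.update_of_ne (Sum.inl_ne_inr) _ _
    have zrn : ∀ j, j ≠ m → z' (Sum.inr j) = z (Sum.inr j) := fun j hj =>
      Function.update_of_ne (fun h => hj (Sum.inr_injective h)) _ _
    have zrm : z' (Sum.inr m) = true := by rw [hz', Function.update_self, hd]; rfl
    refine ⟨z', ⟨Sum.inr m, by rw [Fsys_inr, hn, hd]; simp, rfl⟩, ?_, ?_⟩
    · intro k hBP
      by_cases hk : k = m
      · have hj0 := hBP.2.2.2 j0 (by rw [hk]; exact hadj0)
        have hj0m : j0 ≠ m := fun e => (G.ne_of_adj hadj0) e.symm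
        rw [zl j0, zrn j0 hj0m] at hj0
        exact hne0 hj0
      by_cases hadj : G.Adj k m
      · have := (hBP.2.2.2 m hadj).2
        rw [zrm] at this; simp at this
      · exact hQ k (BP_of_agree G (zl k) (zrn k hk)
          (fun j hj => ⟨zl j, zrn j (fun e => hadj (e ▸ hj))⟩) hBP)
    · refine pot_lt_of m (fun j hj => ⟨zl j, zrn j hj⟩) ?_
      have e1 : cellpot x z m = 3 := by simp [cellpot, hxm, hn, hd]
      have e2 : cellpot x z' m = 2 := by simp [cellpot, hxm, (zl m).trans hn, zrm]
      rw [e1, e2]; norm_num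
  by_cases h6 : ∃ m, x (Sum.inr m) = false ∧ z (Sum.inl m) = false ∧ z (Sum.inr m) = false ∧
      ∃ j, G.Adj m j ∧ z (Sum.inr j) = true
  · -- M1b : m ∈ V at (F,F) with a delta-true neighbour, raise n
    obtain ⟨m, hxm, hn, hd, j0, hadj0, hdj0⟩ := h6
    set z' := Function.update z (Sum.inl m) (!z (Sum.inl m)) with hz'
    have zr : ∀ j, z' (Sum.inr j) = z (Sum.inr j) := fun j =>
      Function.update_of_ne (Sum.inr_ne_inl) _ _
    have zln : ∀ j, j ≠ m → z' (Sum.inl j) = z (Sum.inl j) := fun j hj =>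
      Function.update_of_ne (fun h => hj (Sum.inl_injective h)) _ _
    have zlm : z' (Sum.inl m) = true := by rw [hz', Function.update_self, hn]; rfl
    refine ⟨z', ⟨Sum.inl m, ?_, rfl⟩, ?_, ?_⟩
    · rw [Fsys_inl, hn]
      simp only [ne_eq, decide_eq_false_iff_not, not_not]
      exact ⟨j0, hadj0, hdj0⟩
    · intro k hBP
      by_cases hk : k = m
      · subst hk; rw [hBP.2.1] at zlm; simp at zlm
      by_cases hadj : G.Adj k m
      · refine h5 ⟨m, hxm, hn, hd, k, G.adj_symm hadj, ?_⟩
        have : z (Sum.inl k) = false := by rw [← zln k hk]; exact hBP.2.1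
        simp [this]
      · exact hQ k (BP_of_agree G (zln k hk) (zr k)
          (fun j hj => ⟨zln j (fun e => hadj (e ▸ hj)), zr j⟩) hBP)
    · refine pot_lt_of m (fun j hj => ⟨zln j hj, zr j⟩) ?_
      have e1 : cellpot x z m = 3 := by simp [cellpot, hxm, hn, hd]
      have e2 : cellpot x z' m = 0 := by simp [cellpot, hxm, zlm, (zr m).trans hd]
      rw [e1, e2]; norm_num
  -- terminal case: z = x
  exfalso
  apply hzx
  have T1 : ∀ j, x (Sum.inr j) = false → z (Sum.inr j) = false := by
    intro j hxj
    cases hzd : z (Sum.inr j) with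
    | false => rfl
    | true =>
      exfalso
      cases hzn : z (Sum.inl j) with
      | true => exact h3 ⟨j, hxj, hzn, hzd⟩
      | false =>
        have hnbr : ∀ j', G.Adj j j' → z (Sum.inr j') = false := by
          intro j' hadj
          cases hzd' : z (Sum.inr j') with
          | false => rfl
          | true => exact absurd ⟨j, hxj, hzn, hzd, j', hadj, hzd'⟩ h2
        refine hQ j ⟨hxj, hzn, hzd, fun j' hadj => ⟨?_, hnbr j' hadj⟩⟩
        cases hzn' : z (Sum.inl j') with
        | true => rfl
        | false =>
          exfalso
          cases hxj' : x (Sum.inr j') with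
          | true => exact h1 ⟨j', hxj', hzn', hnbr j' hadj⟩
          | false =>
            exact h5 ⟨j', hxj', hzn', hnbr j' hadj, j, G.adj_symm hadj, by simp [hzn]⟩
  have T2 : ∀ i, x (Sum.inr i) = true → z (Sum.inl i) = false := by
    intro i hxi
    cases hzn : z (Sum.inl i) with
    | false => rfl
    | true =>
      exfalso
      by_cases hall : ∀ j, G.Adj i j → z (Sum.inr j) = false
      · exact h4 ⟨i, hxi, hzn, hall⟩
      · push_neg at hall
        obtain ⟨j, hadj, hne⟩ := hall
        have hdj : z (Sum.inr j) = true := by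
          cases h : z (Sum.inr j)
          · exact absurd h hne
          · rfl
        cases hxj : x (Sum.inr j) with
        | true => exact indep G hx hadj hxi hxj
        | false => rw [T1 j hxj] at hdj; simp at hdj
  have T3 : ∀ i, x (Sum.inr i) = true → z (Sum.inr i) = true := by
    intro i hxi
    cases hzd : z (Sum.inr i) with
    | true => rfl
    | false => exact absurd ⟨i, hxi, T2 i hxi, hzd⟩ h1
  have T4 : ∀ i, x (Sum.inr i) = false → z (Sum.inl i) = true := by
    intro i hxi
    cases hzn : z (Sum.inl i) with
    | true => rfl
    | false =>
      exfalso
      have hzd : z (Sum.inr i) = false := T1 i hxi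
      obtain ⟨u, hadj, hxu⟩ := dom G hx hxi
      exact h5 ⟨i, hxi, hzn, hzd, u, hadj, by simp [T2 u hxu]⟩
  funext c
  cases c with
  | inl i =>
    cases hxi : x (Sum.inr i) with
    | true => rw [T2 i hxi, xnl G hx i, hxi]; rfl
    | false => rw [T4 i hxi, xnl G hx i, hxi]; rfl
  | inr i =>
    cases hxi : x (Sum.inr i) with
    | true => exact T3 i hxi
    | false => exact T1 i hxi


lemma reach (hx : Fsys G x = x) :
    ∀ N z, pot x z < N → (∀ k, ¬ BP G x z k) →
      Relation.ReflTransGen (asyncStep (Fsys G)) z x := by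
  intro N
  induction N with
  | zero => intro z h _; exact absurd h (Nat.not_lt_zero _)
  | succ N ih =>
    intro z hz hQ
    by_cases hzx : z = x
    · subst hzx; exact Relation.ReflTransGen.refl
    · obtain ⟨z', hs, hQ', hlt⟩ := step_exists G hx z hQ hzx
      exact Relation.ReflTransGen.head hs (ih z' (by omega) hQ')

end DNAux

set_option linter.unusedVariables false in
theorem stmt18 {L : ℕ} (G : SimpleGraph (Fin L)) [DecidableRel G.Adj]
    (hc : G.Connected) (y x : Fin L ⊕ Fin L → Bool) (hx : Fsys G x = x)
    (hmem : ∀ A : Set (Fin L ⊕ Fin L → Bool), isTrapSpace (Fsys G) A → y ∈ A → x ∈ A) :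
    Relation.ReflTransGen (asyncStep (Fsys G)) y x := by
  classical
  have hQy : ∀ k, ¬ DNAux.BP G x y k := by
    intro k hBP
    obtain ⟨hbx, hb1, hb2, hb3⟩ := hBP
    set I : Set (Fin L ⊕ Fin L) :=
      {c | ¬ Sum.elim (fun i => i = k ∨ G.Adj k i) (fun i => i = k ∨ G.Adj k i) c} with hI
    set A : Set (Fin L ⊕ Fin L → Bool) := {w | ∀ c ∉ I, w c = y c} with hA
    have hFix : ∀ c, c ∉ I ↔
        Sum.elim (fun i => i = k ∨ G.Adj k i) (fun i => i = k ∨ G.Adj k i) c := by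
      intro c; simp [hI]
    have hyA : y ∈ A := fun c _ => rfl
    have htrap : isTrapSet (Fsys G) A := by
      intro w hw w' hstep
      obtain ⟨c, hfc, rfl⟩ := hstep
      intro c' hc'
      rcases eq_or_ne c' c with rfl | hne
      · exfalso
        apply hfc
        have hFixc := (hFix c').1 hc'
        cases c' with
        | inl i =>
          rcases hFixc with rfl | hadj
          · have hwk : w (Sum.inl i) = false := (hw _ hc').trans hb1
            have hnb : ∀ j, G.Adj i j → w (Sum.inr j) = false := fun j hj =>
              (hw _ ((hFix (Sum.inr j)).2 (Or.inr hj))).trans (hb3 j hj).2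
            rw [DNAux.Fsys_inl, hwk]
            simp only [decide_eq_false_iff_not]
            rintro ⟨j, hj, hdj⟩
            rw [hnb j hj] at hdj; simp at hdj
          · have hwi : w (Sum.inl i) = true := (hw _ hc').trans (hb3 i hadj).1
            have hwk : w (Sum.inr k) = true :=
              (hw _ ((hFix (Sum.inr k)).2 (Or.inl rfl))).trans hb2
            rw [DNAux.Fsys_inl, hwi]
            exact decide_eq_true ⟨k, G.adj_symm hadj, hwk⟩
        | inr i =>
          rcases hFixc with rfl | hadj
          · have hwn : w (Sum.inl i) = false :=
              (hw _ ((hFix (Sum.inl i)).2 (Or.inl rfl))).trans hb1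
            have hwd : w (Sum.inr i) = true := (hw _ hc').trans hb2
            rw [DNAux.Fsys_inr, hwn, hwd]; rfl
          · have hwn : w (Sum.inl i) = true :=
              (hw _ ((hFix (Sum.inl i)).2 (Or.inr hadj))).trans (hb3 i hadj).1
            have hwd : w (Sum.inr i) = false := (hw _ hc').trans (hb3 i hadj).2
            rw [DNAux.Fsys_inr, hwn, hwd]; rfl
      · rw [Function.update_of_ne hne]
        exact hw c' hc'
    have hxA := hmem A ⟨⟨y, I, rfl⟩, htrap⟩ hyA
    have hk := hxA (Sum.inr k) ((hFix (Sum.inr k)).2 (Or.inl rfl))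
    rw [hbx, hb2] at hk
    simp at hk
  exact DNAux.reach G hx (DNAux.pot x y + 1) y (Nat.lt_succ_self _) hQy
end

section
/- For the generalized reduced system N^k over a graph G, x ∈ B^L is a fixed point of N^k if and only if the set Q = {i : x_i = 1} is a k-minimal transversal of the hypergraph H(k), i.e., Q meets every edge of H(k) and for each i ∈ Q one has |S(i) ∩ Q| ≤ |S(i)| − k. -/
/-- The generalized reduced Delta-Notch system `N^k`: Notch in cell `i` is high iff at
least `k` neighbouring cells have low Notch. -/
def Nk {L : ℕ} (G : SimpleGraph (Fin L)) [DecidableRel G.Adj] (k : ℕ)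
    (x : Fin L → Bool) : Fin L → Bool :=
  fun i => decide (k ≤ ((G.neighborFinset i).filter (fun j => x j = false)).card)

lemma card_split {L : ℕ} (G : SimpleGraph (Fin L)) [DecidableRel G.Adj]
    (x : Fin L → Bool) (i : Fin L) :
    ((G.neighborFinset i).filter (fun j => x j = true)).card
      + ((G.neighborFinset i).filter (fun j => x j = false)).card = G.degree i := by
  rw [← G.card_neighborFinset_eq_degree]
  have := Finset.card_filter_add_card_filter_not
    (s := G.neighborFinset i) (p := fun j => x j = true)
  simpa [Bool.not_eq_true] using this

theorem stmt19 {L : ℕ} (G : SimpleGraph (Fin L)) [DecidableRel G.Adj]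
    (hc : G.Connected) (k : ℕ) (hk : 1 ≤ k) (x : Fin L → Bool) :
    Nk G k x = x ↔
      ((∀ i : Fin L, ∀ H : Finset (Fin L), H ⊆ G.neighborFinset i → H.card = k →
          ∃ q ∈ insert i H, x q = true) ∧
        ∀ i : Fin L, x i = true →
          (((G.neighborFinset i).filter (fun j => x j = true)).card : ℤ) ≤
            (G.degree i : ℤ) - (k : ℤ)) := by
  constructor
  · intro hfix
    constructor
    · intro i H hHsub hHcard
      by_cases hi : x i = true
      · exact ⟨i, Finset.mem_insert_self _ _, hi⟩
      · have hi' : x i = false := by simpa using hi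
        have : Nk G k x i = false := by rw [hfix]; exact hi'
        have hlt : ((G.neighborFinset i).filter (fun j => x j = false)).card < k := by
          simpa [Nk, not_le] using this
        -- some element of H has x = true
        by_contra hcontra
        push_neg at hcontra
        have hall : H ⊆ (G.neighborFinset i).filter (fun j => x j = false) := by
          intro j hj
          simp only [Finset.mem_filter]
          refine ⟨hHsub hj, ?_⟩
          have := hcontra j (Finset.mem_insert_of_mem hj)
          simpa using this
        have := Finset.card_le_card hall
        omega
    · intro i hi
      have : Nk G k x i = true := by rw [hfix]; exact hi
      have hle : k ≤ ((G.neighborFinset i).filter (fun j => x j = false)).card := by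
        simpa [Nk] using this
      have hsplit := card_split G x i
      omega
  · rintro ⟨h1, h2⟩
    funext i
    by_cases hi : x i = true
    · have hle := h2 i hi
      have hsplit := card_split G x i
      have : k ≤ ((G.neighborFinset i).filter (fun j => x j = false)).card := by omega
      rw [hi]
      simpa [Nk] using this
    · have hi' : x i = false := by simpa using hi
      rw [hi']
      have hlt : ((G.neighborFinset i).filter (fun j => x j = false)).card < k := by
        by_contra hge
        push_neg at hge
        obtain ⟨H, hHsub, hHcard⟩ := Finset.exists_subset_card_eq hge
        obtain ⟨q, hq, hqt⟩ := h1 i H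
          (hHsub.trans (Finset.filter_subset _ _)) hHcard
        rcases Finset.mem_insert.mp hq with rfl | hqH
        · rw [hi'] at hqt; exact Bool.false_ne_true hqt
        · have := hHsub hqH
          simp only [Finset.mem_filter] at this
          rw [this.2] at hqt; exact Bool.false_ne_true hqt
      simp [Nk, not_le.mpr hlt]
end
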